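/- arXiv:1012.3844 — 5 statements merged into one kernel-verified Lean document; each statement's English description precedes it below -/
import Mathlib

section
/- Let 0 < φ < 1, let f be the density of an absolutely continuous nonnegative random variable Z with distribution function F satisfying F(0) = 0, let v : [0,∞) → ℝ be locally bounded, and let m be the locally bounded solution of the defective renewal equation m(u) = φ ∫₀^u m(u−y) f(y) dy + v(u) for u ≥ 0. Assume F and v belong to C²₀([0,∞)). Then for all u > 0 one has m''(u) = φ ( ∫₀^u m'(u−y) f'(y) dy + m(0) f'(u) + m'(u) f(0) ) + v''(u), and lim_{u↓0} m''(u) = φ (v(0) f'(0) + m'(0) f(0)) + v''(0), where m'(0) = φ v(0) f(0) + v'(0). -/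
open MeasureTheory Filter Topology

private lemma conv_continuousWithinAt (g k : ℝ → ℝ) (M T : ℝ) (hT : 0 < T) (hM0 : 0 ≤ M)
    (hk : Continuous k)
    (hg : AEMeasurable g (volume.restrict (Set.Ioo 0 T)))
    (hgM : ∀ s ∈ Set.Ioo (0:ℝ) T, |g s| ≤ M)
    (u : ℝ) (hu : u ∈ Set.Icc (0:ℝ) T) :
    ContinuousWithinAt (fun x => ∫ s in (0:ℝ)..x, g s * k (x - s)) (Set.Icc 0 T) u := by
  obtain ⟨K, hK⟩ : ∃ K : ℝ, ∀ t ∈ Set.Icc (-T) T, |k t| ≤ K := by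
    obtain ⟨K, hK⟩ := (isCompact_Icc (a := -T) (b := T)).exists_bound_of_continuousOn
      hk.continuousOn
    exact ⟨K, by simpa using hK⟩
  have hK0 : 0 ≤ K := le_trans (abs_nonneg _) (hK 0 ⟨by linarith, by linarith⟩)
  set F : ℝ → ℝ → ℝ := fun x s => (Set.Ioo (0:ℝ) x).indicator (fun s => g s * k (x - s)) s
    with hF
  have key : ∀ x ∈ Set.Icc (0:ℝ) T, (∫ s in (0:ℝ)..x, g s * k (x - s)) = ∫ s, F x s := by
    intro x hx
    rw [intervalIntegral.integral_of_le hx.1, ← Measure.restrict_congr_set Ioo_ae_eq_Ioc,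
      ← MeasureTheory.integral_indicator measurableSet_Ioo]
  have hmeas : ∀ x ∈ Set.Icc (0:ℝ) T, AEStronglyMeasurable (F x) volume := by
    intro x hx
    rw [hF, aestronglyMeasurable_iff_aemeasurable,
      aemeasurable_indicator_iff measurableSet_Ioo]
    exact (hg.mono_measure (Measure.restrict_mono (Set.Ioo_subset_Ioo le_rfl hx.2) le_rfl)).mul
      ((hk.comp (continuous_const.sub continuous_id)).measurable.aemeasurable)
  have hbound : ∀ x ∈ Set.Icc (0:ℝ) T, ∀ s : ℝ,
      ‖F x s‖ ≤ (Set.Ioo (0:ℝ) T).indicator (fun _ => M * K) s := by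
    intro x hx s
    by_cases hs : s ∈ Set.Ioo (0:ℝ) x
    · have hsT : s ∈ Set.Ioo (0:ℝ) T := Set.Ioo_subset_Ioo le_rfl hx.2 hs
      rw [hF]
      simp only [Set.indicator_of_mem hs, Set.indicator_of_mem hsT]
      rw [Real.norm_eq_abs, abs_mul]
      have h1 : |g s| ≤ M := hgM s hsT
      have h2 : |k (x - s)| ≤ K := by
        have := hs.1; have := hs.2; have := hx.2
        exact hK _ ⟨by linarith, by linarith⟩
      exact mul_le_mul h1 h2 (abs_nonneg _) hM0
    · rw [hF]
      simp only [Set.indicator_of_notMem hs, norm_zero]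
      by_cases hsT : s ∈ Set.Ioo (0:ℝ) T
      · rw [Set.indicator_of_mem hsT]; positivity
      · rw [Set.indicator_of_notMem hsT]
  have hbint : Integrable ((Set.Ioo (0:ℝ) T).indicator (fun _ => M * K)) volume := by
    rw [integrable_indicator_iff measurableSet_Ioo]
    exact integrableOn_const (by simp [Real.volume_Ioo])
  have hconv : ∀ᵐ s : ℝ ∂volume, Tendsto (fun x => F x s) (𝓝[Set.Icc (0:ℝ) T] u) (𝓝 (F u s)) := by
    have : ∀ᵐ s : ℝ ∂volume, s ≠ u := by
      rw [MeasureTheory.ae_iff]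
      simp only [not_ne_iff]
      have : {s : ℝ | s = u} = {u} := by ext s; simp
      rw [this]; exact Real.volume_singleton
    filter_upwards [this] with s hs
    by_cases hcase : s ∈ Set.Ioo (0:ℝ) u
    · have hev : ∀ᶠ x in 𝓝[Set.Icc (0:ℝ) T] u, s < x :=
        Filter.Eventually.filter_mono nhdsWithin_le_nhds (eventually_gt_nhds hcase.2)
      have heq : (fun x => F x s) =ᶠ[𝓝[Set.Icc (0:ℝ) T] u] fun x => g s * k (x - s) := by
        filter_upwards [hev] with x hx
        rw [hF]; simp only []
        rw [Set.indicator_of_mem (show s ∈ Set.Ioo (0:ℝ) x from ⟨hcase.1, hx⟩)]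
      have hFu : F u s = g s * k (u - s) := by
        rw [hF]; simp only []; rw [Set.indicator_of_mem hcase]
      rw [hFu]
      refine Tendsto.congr' heq.symm ?_
      exact (tendsto_const_nhds.mul ((hk.tendsto _).comp
        ((tendsto_id.sub tendsto_const_nhds).mono_left nhdsWithin_le_nhds)))
    · have hFu : F u s = 0 := by
        rw [hF]; simp only []; rw [Set.indicator_of_notMem hcase]
      rw [hFu]
      rcases lt_trichotomy s 0 with hs0 | hs0 | hs0
      · have : ∀ x, F x s = 0 := fun x => by
          rw [hF]; simp only []
          exact Set.indicator_of_notMem (fun hmem => absurd hmem.1 (not_lt.mpr hs0.le)) _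
        simpa [this] using tendsto_const_nhds (α := ℝ)
      · have : ∀ x, F x s = 0 := fun x => by
          rw [hF]; simp only []
          exact Set.indicator_of_notMem (fun hmem => absurd hmem.1 (by rw [← hs0]; exact lt_irrefl s)) _
        simpa [this] using tendsto_const_nhds (α := ℝ)
      · -- s > 0 and s ∉ Ioo 0 u, s ≠ u ⇒ s > u
        have hsu : u < s := by
          rcases lt_trichotomy s u with h | h | h
          · exact absurd ⟨hs0, h⟩ hcase
          · exact absurd h hs
          · exact h
        have hev : ∀ᶠ x in 𝓝[Set.Icc (0:ℝ) T] u, x < s :=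
          Filter.Eventually.filter_mono nhdsWithin_le_nhds (eventually_lt_nhds hsu)
        have heq : (fun x => F x s) =ᶠ[𝓝[Set.Icc (0:ℝ) T] u] fun _ => (0:ℝ) := by
          filter_upwards [hev] with x hx
          rw [hF]; simp only []
          exact Set.indicator_of_notMem (fun hmem => absurd hmem.2 (not_lt.mpr hx.le)) _
        exact Tendsto.congr' heq.symm tendsto_const_nhds
  have main := MeasureTheory.tendsto_integral_filter_of_dominated_convergence
    (μ := volume) (l := 𝓝[Set.Icc (0:ℝ) T] u) (F := F) (f := F u)
    ((Set.Ioo (0:ℝ) T).indicator (fun _ => M * K))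
    (by filter_upwards [self_mem_nhdsWithin] with x hx; exact hmeas x hx)
    (by filter_upwards [self_mem_nhdsWithin] with x hx
        exact Filter.Eventually.of_forall (hbound x hx))
    hbint hconv
  unfold ContinuousWithinAt
  have heq2 : (fun x => ∫ s in (0:ℝ)..x, g s * k (x - s))
      =ᶠ[𝓝[Set.Icc (0:ℝ) T] u] fun x => ∫ s, F x s := by
    filter_upwards [self_mem_nhdsWithin] with x hx
    exact key x hx
  rw [← key u hu] at main
  exact Tendsto.congr' heq2.symm main

private lemma refl_integral (m f : ℝ → ℝ) (u : ℝ) :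
    (∫ y in (0:ℝ)..u, m (u - y) * f y) = ∫ s in (0:ℝ)..u, m s * f (u - s) := by
  have := intervalIntegral.integral_comp_sub_left (a := 0) (b := u)
    (fun s => m s * f (u - s)) u
  simp only [sub_self, sub_zero] at this
  rw [← this]
  apply intervalIntegral.integral_congr
  intro y _
  simp only []
  rw [sub_sub_cancel]

private lemma refl_iff (m f : ℝ → ℝ) (u : ℝ) (hu : 0 < u) :
    IntervalIntegrable (fun y => m (u - y) * f y) volume 0 u ↔
    IntegrableOn (fun s => m s * f (u - s)) (Set.Ioo 0 u) volume := by
  rw [intervalIntegrable_iff, Set.uIoc_of_le hu.le]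
  have hemb : MeasurableEmbedding (fun s : ℝ => u - s) :=
    (MeasurableEquiv.subLeft u).measurableEmbedding
  have hmp : MeasurePreserving (fun s : ℝ => u - s) volume volume :=
    Measure.measurePreserving_sub_left volume u
  have hpre : (fun s : ℝ => u - s) ⁻¹' (Set.Ioc 0 u) = Set.Ico 0 u := by
    ext s
    simp only [Set.mem_preimage, Set.mem_Ioc, Set.mem_Ico]
    constructor
    · rintro ⟨h1, h2⟩; constructor <;> linarith
    · rintro ⟨h1, h2⟩; constructor <;> linarith
  have hres : MeasurePreserving (fun s : ℝ => u - s)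
      (volume.restrict (Set.Ico 0 u)) (volume.restrict (Set.Ioc 0 u)) := by
    have := hmp.restrict_preimage (s := Set.Ioc 0 u) measurableSet_Ioc
    rwa [hpre] at this
  have hcomp : ((fun y => m (u - y) * f y) ∘ (fun s : ℝ => u - s))
      = fun s => m s * f (u - s) := by
    funext s
    simp only [Function.comp_apply, sub_sub_cancel]
  constructor
  · intro h
    have := (hres.integrable_comp_emb hemb (g := fun y => m (u - y) * f y)).mpr h
    rw [hcomp] at this
    exact this.mono_measure (Measure.restrict_mono Set.Ioo_subset_Ico_self le_rfl)
  · intro h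
    have h2 : IntegrableOn (fun s => m s * f (u - s)) (Set.Ico 0 u) volume := by
      unfold IntegrableOn
      rwa [← Measure.restrict_congr_set Ioo_ae_eq_Ico]
    rw [show IntegrableOn (fun s => m s * f (u-s)) (Set.Ico 0 u) volume
      = Integrable (((fun y => m (u - y) * f y) ∘ (fun s : ℝ => u - s)))
        (volume.restrict (Set.Ico 0 u)) from by rw [hcomp]; rfl] at h2
    exact (hres.integrable_comp_emb hemb).mp h2

private lemma renewal_meas (φ : ℝ) (f v m fe : ℝ → ℝ)
    (hfe : Continuous fe) (hfef : ∀ x : ℝ, 0 < x → fe x = f x)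
    (hv_c : ContinuousOn v (Set.Ici 0))
    (hm_loc : ∀ x : ℝ, 0 < x → ∃ M, ∀ u ∈ Set.Icc (0:ℝ) x, |m u| ≤ M)
    (hm_eq : ∀ u : ℝ, 0 ≤ u → m u = φ * (∫ y in (0:ℝ)..u, m (u - y) * f y) + v u) :
    (∀ T : ℝ, 0 < T → AEMeasurable m (volume.restrict (Set.Ioo 0 T))) ∧
    (∀ u : ℝ, 0 < u → IntervalIntegrable (fun y => m (u - y) * f y) volume 0 u) := by
  classical
  have hfc : ContinuousOn f (Set.Ioi 0) :=
    hfe.continuousOn.congr (fun x hx => (hfef x hx).symm)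
  set Good : ℝ → Prop := fun u => IntervalIntegrable (fun y => m (u - y) * f y) volume 0 u
    with hGoodDef
  set U : ℝ → Set ℝ := fun u => Set.Ioo 0 u ∩ (fun s => f (u - s)) ⁻¹' ({0}ᶜ) with hUdef
  have hfrc : ∀ u : ℝ, ContinuousOn (fun s => f (u - s)) (Set.Ioo 0 u) := by
    intro u
    apply hfc.comp ((continuous_const.sub continuous_id).continuousOn)
    intro s hs
    simp only [Set.mem_Ioi]
    have := hs.2; simp only [Pi.sub_apply, id] at *; linarith
  have hUopen : ∀ u : ℝ, IsOpen (U u) := fun u =>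
    (hfrc u).isOpen_inter_preimage isOpen_Ioo isOpen_compl_singleton
  have hUsub : ∀ u : ℝ, U u ⊆ Set.Ioo 0 u := fun u => Set.inter_subset_left
  have hUmem : ∀ u s : ℝ, s ∈ U u ↔ (s ∈ Set.Ioo 0 u ∧ f (u - s) ≠ 0) := by
    intro u s
    rw [hUdef]
    simp [Set.mem_inter_iff, Set.mem_preimage]
  -- Step D
  have stepD : ∀ u : ℝ, 0 < u → Good u → AEMeasurable m (volume.restrict (U u)) := by
    intro u hu hg
    have h1 : IntegrableOn (fun s => m s * f (u - s)) (Set.Ioo 0 u) volume :=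
      (refl_iff m f u hu).mp hg
    have h2 : AEMeasurable (fun s => m s * f (u - s)) (volume.restrict (Set.Ioo 0 u)) :=
      h1.aemeasurable
    have h3 : AEMeasurable (fun s => m s * f (u - s)) (volume.restrict (U u)) :=
      h2.mono_measure (Measure.restrict_mono (hUsub u) le_rfl)
    have h4 : AEMeasurable (fun s => (f (u - s))⁻¹) (volume.restrict (U u)) := by
      have hcont : ContinuousOn (fun s => (f (u - s))⁻¹) (U u) := by
        apply ContinuousOn.inv₀ ((hfrc u).mono (hUsub u))
        intro s hs
        exact ((hUmem u s).mp hs).2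
      exact hcont.aemeasurable (hUopen u).measurableSet
    refine (h3.mul h4).congr ?_
    rw [Filter.EventuallyEq, ae_restrict_iff' (hUopen u).measurableSet]
    refine Filter.Eventually.of_forall (fun s hs => ?_)
    have hne := ((hUmem u s).mp hs).2
    simp only [Pi.mul_apply]
    field_simp
  -- Step E
  have stepE : ∀ u : ℝ, 0 < u → AEMeasurable m (volume.restrict (U u)) → Good u := by
    intro u hu hmeas
    obtain ⟨M, hM⟩ := hm_loc u hu
    have hM0 : 0 ≤ M := le_trans (abs_nonneg _) (hM 0 ⟨le_rfl, hu.le⟩)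
    obtain ⟨K, hK⟩ : ∃ K : ℝ, ∀ t ∈ Set.Icc (0:ℝ) u, |fe t| ≤ K := by
      obtain ⟨K, hK⟩ := (isCompact_Icc (a := (0:ℝ)) (b := u)).exists_bound_of_continuousOn
        hfe.continuousOn
      exact ⟨K, by simpa using hK⟩
    have hK0 : 0 ≤ K := le_trans (abs_nonneg _) (hK 0 ⟨le_rfl, hu.le⟩)
    have hbd : ∀ s ∈ Set.Ioo (0:ℝ) u, |m s * f (u - s)| ≤ M * K := by
      intro s hs
      rw [abs_mul]
      have h1 : |m s| ≤ M := hM s ⟨hs.1.le, hs.2.le⟩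
      have h2 : |f (u - s)| ≤ K := by
        rw [← hfef _ (by linarith [hs.2] : (0:ℝ) < u - s)]
        exact hK _ ⟨by linarith [hs.2], by linarith [hs.1]⟩
      exact mul_le_mul h1 h2 (abs_nonneg _) hM0
    have hfm : AEMeasurable (fun s => f (u - s)) (volume.restrict (Set.Ioo 0 u)) :=
      (hfrc u).aemeasurable measurableSet_Ioo
    have hmind : AEMeasurable ((U u).indicator m) (volume.restrict (Set.Ioo 0 u)) := by
      rw [aemeasurable_indicator_iff (hUopen u).measurableSet,
        Measure.restrict_restrict (hUopen u).measurableSet,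
        Set.inter_eq_self_of_subset_left (hUsub u)]
      exact hmeas
    have hqmeas : AEMeasurable (fun s => m s * f (u - s)) (volume.restrict (Set.Ioo 0 u)) := by
      refine (hmind.mul hfm).congr ?_
      rw [Filter.EventuallyEq, ae_restrict_iff' measurableSet_Ioo]
      refine Filter.Eventually.of_forall (fun s hs => ?_)
      by_cases hf0 : f (u - s) = 0
      · simp [hf0]
      · rw [Pi.mul_apply, Set.indicator_of_mem ((hUmem u s).mpr ⟨hs, hf0⟩)]
    have hint : IntegrableOn (fun s => m s * f (u - s)) (Set.Ioo 0 u) volume := by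
      refine Integrable.mono' (g := fun _ => M * K) ?_ hqmeas.aestronglyMeasurable ?_
      · exact integrableOn_const (by simp [Real.volume_Ioo])
      · rw [ae_restrict_iff' measurableSet_Ioo]
        exact Filter.Eventually.of_forall (fun s hs => by
          rw [Real.norm_eq_abs]; exact hbd s hs)
    exact (refl_iff m f u hu).mpr hint
  -- Step C1 : accumulation of good points
  have stepC1 : ∀ u : ℝ, 0 < u → ∀ g : ℕ → ℝ, (∀ n, 0 < g n ∧ Good (g n)) →
      Tendsto g atTop (𝓝 u) → Good u := by
    intro u hu g hg ht
    have cover : U u ⊆ ⋃ n, U (g n) := by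
      intro s hs
      obtain ⟨hs1, hs2⟩ := (hUmem u s).mp hs
      have hfc_at : ContinuousAt f (u - s) :=
        hfc.continuousAt (Ioi_mem_nhds (by linarith [hs1.2] : (0:ℝ) < u - s))
      have h1 : Tendsto (fun n => f (g n - s)) atTop (𝓝 (f (u - s))) :=
        hfc_at.tendsto.comp (ht.sub tendsto_const_nhds)
      have h2 : ∀ᶠ n in atTop, f (g n - s) ≠ 0 := h1.eventually_ne hs2
      have h3 : ∀ᶠ n in atTop, s < g n := ht.eventually (eventually_gt_nhds hs1.2)
      obtain ⟨n, hn1, hn2⟩ := (h2.and h3).exists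
      exact Set.mem_iUnion.mpr ⟨n, (hUmem (g n) s).mpr ⟨⟨hs1.1, hn2⟩, hn1⟩⟩
    have hae : AEMeasurable m (Measure.sum (fun n => volume.restrict (U (g n)))) :=
      aemeasurable_sum_measure_iff.mpr (fun n => stepD _ (hg n).1 (hg n).2)
    have h5 : AEMeasurable m (volume.restrict (⋃ n, U (g n))) :=
      hae.mono_measure Measure.restrict_iUnion_le
    exact stepE u hu (h5.mono_measure (Measure.restrict_mono cover le_rfl))
  -- Bad set is open
  have badOpen : IsOpen {u : ℝ | 0 < u ∧ ¬ Good u} := by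
    rw [Metric.isOpen_iff]
    intro u hu
    by_contra hno
    push_neg at hno
    have hex : ∀ n : ℕ, ∃ w : ℝ, |w - u| < min (1/((n:ℝ)+1)) (u/2) ∧ 0 < w ∧ Good w := by
      intro n
      have hpos : 0 < min (1/((n:ℝ)+1)) (u/2) := by
        apply lt_min
        · positivity
        · linarith [hu.1]
      obtain ⟨w, hw1, hw2⟩ := Set.not_subset.mp (hno _ hpos)
      rw [Metric.mem_ball, Real.dist_eq] at hw1
      have hwpos : 0 < w := by
        have : |w - u| < u/2 := lt_of_lt_of_le hw1 (min_le_right _ _)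
        have := abs_lt.mp this
        linarith [this.1, hu.1]
      refine ⟨w, hw1, hwpos, ?_⟩
      by_contra hbad
      exact hw2 ⟨hwpos, hbad⟩
    choose g hg1 hg2 hg3 using hex
    have htend : Tendsto g atTop (𝓝 u) := by
      rw [Metric.tendsto_atTop]
      intro ε hε
      obtain ⟨N, hN⟩ := exists_nat_one_div_lt hε
      refine ⟨N, fun n hn => ?_⟩
      rw [Real.dist_eq]
      have h1 : |g n - u| < 1/((n:ℝ)+1) := lt_of_lt_of_le (hg1 n) (min_le_left _ _)
      have h2 : 1/((n:ℝ)+1) ≤ 1/((N:ℝ)+1) := by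
        apply one_div_le_one_div_of_le
        · positivity
        · have : (N:ℝ) ≤ n := Nat.cast_le.mpr hn
          linarith
      linarith
    exact hu.2 (stepC1 u hu.1 g (fun n => ⟨hg2 n, hg3 n⟩) htend)
  have goodMeas : MeasurableSet {u : ℝ | 0 < u ∧ Good u} := by
    have : {u : ℝ | 0 < u ∧ Good u} = Set.Ioi 0 \ {u : ℝ | 0 < u ∧ ¬ Good u} := by
      ext u
      simp only [Set.mem_setOf_eq, Set.mem_diff, Set.mem_Ioi]
      tauto
    rw [this]
    exact measurableSet_Ioi.diff badOpen.measurableSet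
  -- main measurability claim
  have main : ∀ T : ℝ, 0 < T → AEMeasurable m (volume.restrict (Set.Ioo 0 T)) := by
    intro T hT
    obtain ⟨M, hM⟩ := hm_loc T hT
    have hM0 : 0 ≤ M := le_trans (abs_nonneg _) (hM 0 ⟨le_rfl, hT.le⟩)
    set W : Set ℝ := ⋃ g : {u : ℝ // 0 < u ∧ Good u}, U g.1 with hWdef
    have hWopen : IsOpen W := isOpen_iUnion (fun g => hUopen g.1)
    have hWsubmem : ∀ g : ℝ, 0 < g → Good g → U g ⊆ W := by
      intro g hg1 hg2 s hs
      exact Set.mem_iUnion.mpr ⟨⟨g, hg1, hg2⟩, hs⟩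
    have haeW : AEMeasurable m (volume.restrict W) := by
      obtain ⟨Tset, hTc, hTeq⟩ :=
        TopologicalSpace.isOpen_iUnion_countable (fun g : {u : ℝ // 0 < u ∧ Good u} => U g.1)
          (fun g => hUopen g.1)
      rcases Tset.eq_empty_or_nonempty with hemp | hne
      · have : W = ∅ := by
          rw [hWdef, ← hTeq, hemp]
          simp
        rw [this, Measure.restrict_empty]
        exact aemeasurable_zero_measure
      · obtain ⟨e, he⟩ := Set.Countable.exists_eq_range hTc hne
        have hWe : W = ⋃ n, U (e n).1 := by
          rw [hWdef, ← hTeq, he, Set.biUnion_range]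
        have hae : AEMeasurable m (Measure.sum (fun n => volume.restrict (U (e n).1))) :=
          aemeasurable_sum_measure_iff.mpr (fun n => stepD _ (e n).2.1 (e n).2.2)
        rw [hWe]
        exact (hae.mono_measure Measure.restrict_iUnion_le)
    set ψ := haeW.mk m with hψdef
    have hψmeas : Measurable ψ := haeW.measurable_mk
    have hψae : m =ᶠ[ae (volume.restrict W)] ψ := haeW.ae_eq_mk
    have hE : volume ({s : ℝ | m s ≠ ψ s} ∩ W) = 0 := by
      have := hψae
      rw [Filter.EventuallyEq, ae_iff] at this
      rwa [Measure.restrict_apply' hWopen.measurableSet] at this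
    set ψT : ℝ → ℝ := fun s => max (-M) (min M (ψ s)) with hψTdef
    have hψTmeas : Measurable ψT := measurable_const.max (measurable_const.min hψmeas)
    set gfun : ℝ → ℝ := W.indicator ψT with hgdef
    have hgmeas : Measurable gfun := hψTmeas.indicator hWopen.measurableSet
    have hgbdd : ∀ s, |gfun s| ≤ M := by
      intro s
      rw [hgdef]
      by_cases hs : s ∈ W
      · rw [Set.indicator_of_mem hs, hψTdef, abs_le]
        exact ⟨le_max_left _ _, max_le (by linarith) (min_le_left _ _)⟩
      · rw [Set.indicator_of_notMem hs]
        simpa using hM0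
    set Φ : ℝ → ℝ := fun x => ∫ s in (0:ℝ)..x, gfun s * fe (x - s) with hΦdef
    have hΦcont : ∀ x ∈ Set.Icc (0:ℝ) T, ContinuousWithinAt Φ (Set.Icc 0 T) x := by
      intro x hx
      exact conv_continuousWithinAt gfun fe M T hT hM0 hfe
        hgmeas.aemeasurable (fun s _ => hgbdd s) x hx
    have claimkey : ∀ g : ℝ, 0 < g → g < T → Good g → m g = v g + φ * Φ g := by
      intro g hg0 hgT hGood
      have hI : (∫ y in (0:ℝ)..g, m (g - y) * f y) = Φ g := by
        rw [refl_integral m f g, hΦdef]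
        apply intervalIntegral.integral_congr_ae
        have hEc : ∀ᵐ x : ℝ ∂volume, x ∉ ({s : ℝ | m s ≠ ψ s} ∩ W) := by
          rw [ae_iff]
          simp only [not_not]; exact hE
        have hgne : ∀ᵐ x : ℝ ∂volume, x ≠ g := by
          rw [ae_iff]
          have : {a : ℝ | ¬ a ≠ g} = {g} := by ext a; simp
          rw [this]
          exact Real.volume_singleton
        filter_upwards [hEc, hgne] with x hxE hxg hxI
        rw [Set.uIoc_of_le hg0.le] at hxI
        have hxg' : x < g := lt_of_le_of_ne hxI.2 hxg
        have hgx0 : (0:ℝ) < g - x := by linarith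
        by_cases hf0 : f (g - x) = 0
        · rw [hfef _ hgx0, hf0, mul_zero, mul_zero]
        · have hxU : x ∈ U g := (hUmem g x).mpr ⟨⟨hxI.1, hxg'⟩, hf0⟩
          have hxW : x ∈ W := hWsubmem g hg0 hGood hxU
          have hmx : m x = ψ x := by
            by_contra hne
            exact hxE ⟨hne, hxW⟩
          have hmb : |m x| ≤ M := hM x ⟨hxI.1.le, by linarith⟩
          have hclamp : ψT x = m x := by
            show max (-M) (min M (ψ x)) = m x
            rw [← hmx, min_eq_right (abs_le.mp hmb).2, max_eq_right]
            linarith [(abs_le.mp hmb).1]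
          show m x * f (g - x) = W.indicator ψT x * fe (g - x)
          rw [Set.indicator_of_mem hxW, hclamp, hfef _ hgx0]
      have := hm_eq g hg0.le
      rw [hI] at this
      linarith [this]
    have hrepr : ∀ x ∈ Set.Ioo (0:ℝ) T,
        m x = v x + φ * (Set.indicator {u : ℝ | 0 < u ∧ Good u} Φ x) := by
      intro x hx
      by_cases hgood : Good x
      · rw [Set.indicator_of_mem (show x ∈ {u : ℝ | 0 < u ∧ Good u} from ⟨hx.1, hgood⟩)]
        exact claimkey x hx.1 hx.2 hgood
      · rw [Set.indicator_of_notMem (fun h => hgood h.2)]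
        have := hm_eq x hx.1.le
        rw [intervalIntegral.integral_undef hgood] at this
        rw [this]
        ring
    have hv_ae : AEMeasurable v (volume.restrict (Set.Ioo 0 T)) :=
      (hv_c.mono (fun x hx => le_of_lt hx.1)).aemeasurable measurableSet_Ioo
    have hΦae : AEMeasurable Φ (volume.restrict (Set.Ioo 0 T)) := by
      have hco : ContinuousOn Φ (Set.Icc 0 T) := fun x hx => hΦcont x hx
      exact (hco.mono Set.Ioo_subset_Icc_self).aemeasurable measurableSet_Ioo
    have hind : AEMeasurable (Set.indicator {u : ℝ | 0 < u ∧ Good u} Φ)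
        (volume.restrict (Set.Ioo 0 T)) := hΦae.indicator goodMeas
    refine (hv_ae.add (hind.const_mul φ)).congr ?_
    rw [Filter.EventuallyEq, ae_restrict_iff' measurableSet_Ioo]
    refine Filter.Eventually.of_forall (fun x hx => ?_)
    exact (hrepr x hx).symm

  refine ⟨main, fun u hu => ?_⟩
  have haeT := main (u + 1) (by linarith)
  have hsub : U u ⊆ Set.Ioo 0 (u + 1) :=
    subset_trans (hUsub u) (Set.Ioo_subset_Ioo le_rfl (by linarith))
  exact stepE u hu (haeT.mono_measure (Measure.restrict_mono hsub le_rfl))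

private lemma ftc_ext (g g' : ℝ → ℝ) (a b : ℝ)
    (hd : ∀ x : ℝ, 0 < x → HasDerivAt g (g' x) x)
    (hc : ContinuousOn g' (Set.Ioi 0))
    (hga : Tendsto g (𝓝[>] 0) (𝓝 a))
    (hgb : Tendsto g' (𝓝[>] 0) (𝓝 b)) :
    ∃ k k' : ℝ → ℝ, Continuous k' ∧ (∀ x, HasDerivAt k (k' x) x) ∧
      (∀ x, 0 < x → k x = g x) ∧ (∀ x, 0 < x → k' x = g' x) ∧ k 0 = a ∧ k' 0 = b := by
  classical
  set k' : ℝ → ℝ := fun x => if x ≤ 0 then b else g' x with hk'def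
  have hk'pos : ∀ x : ℝ, 0 < x → k' x = g' x := by
    intro x hx; simp [hk'def, not_le.mpr hx]
  have hk'cont : Continuous k' := by
    rw [continuous_iff_continuousAt]
    intro x
    rcases lt_trichotomy x 0 with hx | hx | hx
    · have : k' =ᶠ[𝓝 x] fun _ => b := by
        filter_upwards [Iio_mem_nhds hx] with y hy
        have : y ≤ 0 := le_of_lt hy
        simp [hk'def, this]
      exact ContinuousAt.congr continuousAt_const this.symm
    · subst hx
      have h1 : Tendsto k' (𝓝[≤] (0:ℝ)) (𝓝 b) := by
        refine Tendsto.congr' ?_ tendsto_const_nhds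
        filter_upwards [self_mem_nhdsWithin] with y hy
        have : y ≤ 0 := hy
        simp [hk'def, this]
      have h2 : Tendsto k' (𝓝[>] (0:ℝ)) (𝓝 b) := by
        refine Tendsto.congr' ?_ hgb
        filter_upwards [self_mem_nhdsWithin] with y hy
        simp [hk'def, not_le.mpr (Set.mem_Ioi.mp hy)]
      have : ContinuousAt k' 0 := by
        unfold ContinuousAt
        have : k' 0 = b := by simp [hk'def]
        rw [this, ← nhdsLE_sup_nhdsGT (0:ℝ)]
        exact Tendsto.sup h1 h2
      exact this
    · have : k' =ᶠ[𝓝 x] g' := by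
        filter_upwards [Ioi_mem_nhds hx] with y hy
        simp [hk'def, not_le.mpr (Set.mem_Ioi.mp hy)]
      exact ContinuousAt.congr (hc.continuousAt (Ioi_mem_nhds hx)) this.symm
  set k : ℝ → ℝ := fun x => a + ∫ t in (0:ℝ)..x, k' t with hkdef
  have hkderiv : ∀ x : ℝ, HasDerivAt k (k' x) x := by
    intro x
    have : HasDerivAt (fun y => ∫ t in (0:ℝ)..y, k' t) (k' x) x :=
      intervalIntegral.integral_hasDerivAt_right (hk'cont.intervalIntegrable _ _)
        (hk'cont.stronglyMeasurableAtFilter _ _) hk'cont.continuousAt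
    simpa [hkdef] using this.const_add a
  have hk0 : k 0 = a := by simp [hkdef]
  have hkpos : ∀ x : ℝ, 0 < x → k x = g x := by
    intro x hx
    have key : ∀ ε ∈ Set.Ioo (0:ℝ) x, k x - k ε = g x - g ε := by
      intro ε hε
      have : ∫ t in ε..x, k' t = g x - g ε := by
        apply intervalIntegral.integral_eq_sub_of_hasDerivAt
        · intro t ht
          rw [Set.uIcc_of_le (le_of_lt hε.2)] at ht
          have ht0 : 0 < t := lt_of_lt_of_le hε.1 ht.1
          exact (hd t ht0).congr_deriv (hk'pos t ht0).symm
        · exact hk'cont.intervalIntegrable _ _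
      have h2 : ∫ t in ε..x, k' t = k x - k ε := by
        apply intervalIntegral.integral_eq_sub_of_hasDerivAt
        · intro t _; exact hkderiv t
        · exact hk'cont.intervalIntegrable _ _
      rw [← this, h2]
    -- limit ε → 0⁺
    have hkc : ContinuousAt k 0 := (hkderiv 0).continuousAt
    have l1 : Tendsto (fun ε => k x - k ε) (𝓝[>] (0:ℝ)) (𝓝 (k x - a)) := by
      refine Tendsto.sub tendsto_const_nhds ?_
      rw [← hk0]
      exact (hkc.tendsto).mono_left nhdsWithin_le_nhds
    have l2 : Tendsto (fun ε => g x - g ε) (𝓝[>] (0:ℝ)) (𝓝 (g x - a)) :=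
      Tendsto.sub tendsto_const_nhds hga
    have heq : (fun ε => k x - k ε) =ᶠ[𝓝[>] (0:ℝ)] fun ε => g x - g ε := by
      filter_upwards [Ioo_mem_nhdsGT_of_mem (Set.left_mem_Ico.mpr hx)] with ε hε
      exact key ε hε
    have := tendsto_nhds_unique (l1.congr' heq) l2
    linarith [this]
  exact ⟨k, k', hk'cont, hkderiv, hkpos, hk'pos, hk0, by simp [hk'def]⟩

private lemma mem_uIoc_bounds {a b s : ℝ} (hs : s ∈ Set.uIoc a b) :
    |s - a| ≤ |b - a| ∧ |b - s| ≤ |b - a| := by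
  rcases Set.mem_uIoc.mp hs with h | h
  · have hba : 0 < b - a := sub_pos.mpr (lt_of_lt_of_le h.1 h.2)
    constructor
    · rw [abs_of_pos (sub_pos.mpr h.1), abs_of_pos hba]; linarith [h.2]
    · rw [abs_of_nonneg (sub_nonneg.mpr h.2), abs_of_pos hba]; linarith [h.1]
  · have hba : b - a < 0 := sub_neg.mpr (lt_of_lt_of_le h.1 h.2)
    constructor
    · rw [abs_of_nonpos (sub_nonpos.mpr h.2), abs_of_neg hba]; linarith [h.1]
    · rw [abs_of_nonpos (sub_nonpos.mpr (le_of_lt h.1)), abs_of_neg hba]; linarith [h.2]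

private lemma conv_hasDerivAt (g k k' : ℝ → ℝ) (hg : Continuous g)
    (hk : ∀ x, HasDerivAt k (k' x) x) (hk' : Continuous k') (u : ℝ) :
    HasDerivAt (fun x => ∫ s in (0:ℝ)..x, g s * k (x - s))
      (g u * k 0 + ∫ s in (0:ℝ)..u, g s * k' (u - s)) u := by
  have hkc : Continuous k := by
    rw [continuous_iff_continuousAt]; exact fun x => (hk x).continuousAt
  set D := g u * k 0 + ∫ s in (0:ℝ)..u, g s * k' (u - s) with hD
  rw [hasDerivAt_iff_isLittleO, Asymptotics.isLittleO_iff]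
  intro c hc
  obtain ⟨Mg, hMg⟩ : ∃ Mg : ℝ, ∀ s ∈ Set.Icc (-(|u|+1)) (|u|+1), |g s| ≤ Mg := by
    obtain ⟨Mg, hMg⟩ := (isCompact_Icc (a := -(|u|+1)) (b := (|u|+1))).exists_bound_of_continuousOn
      hg.continuousOn
    exact ⟨Mg, by simpa using hMg⟩
  have hMg0 : 0 ≤ Mg := le_trans (abs_nonneg _)
    (hMg 0 ⟨by linarith [abs_nonneg u], by linarith [abs_nonneg u]⟩)
  set C := 1 + Mg * (|u| + 1) with hC
  have hCpos : 0 < C := by positivity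
  set ε := c / C with hε
  have hεpos : 0 < ε := div_pos hc hCpos
  have huc : UniformContinuousOn k' (Set.Icc (-(2*|u|+2)) (2*|u|+2)) :=
    (isCompact_Icc).uniformContinuousOn_of_continuous hk'.continuousOn
  rw [Metric.uniformContinuousOn_iff] at huc
  obtain ⟨δ₁, hδ₁pos, hδ₁⟩ := huc ε hεpos
  have hG : ContinuousAt (fun p : ℝ × ℝ => g p.1 * k p.2) (u, 0) :=
    ((hg.comp continuous_fst).mul (hkc.comp continuous_snd)).continuousAt
  rw [Metric.continuousAt_iff] at hG
  obtain ⟨δ₂, hδ₂pos, hδ₂⟩ := hG ε hεpos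
  set δ := min 1 (min δ₁ δ₂) with hδ
  have hδpos : 0 < δ := by positivity
  filter_upwards [Metric.ball_mem_nhds u hδpos] with x hx
  rw [Metric.mem_ball, Real.dist_eq] at hx
  have hxu1 : |x - u| < 1 := lt_of_lt_of_le hx (min_le_left _ _)
  have hxuδ₁ : |x - u| < δ₁ := lt_of_lt_of_le hx (le_trans (min_le_right _ _) (min_le_left _ _))
  have hxuδ₂ : |x - u| < δ₂ := lt_of_lt_of_le hx (le_trans (min_le_right _ _) (min_le_right _ _))
  have int1 : ∀ a b : ℝ, IntervalIntegrable (fun s => g s * k (x - s)) volume a b :=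
    fun a b => (hg.mul (hkc.comp (continuous_const.sub continuous_id))).intervalIntegrable a b
  have int2 : ∀ a b : ℝ, IntervalIntegrable (fun s => g s * k (u - s)) volume a b :=
    fun a b => (hg.mul (hkc.comp (continuous_const.sub continuous_id))).intervalIntegrable a b
  have int3 : ∀ a b : ℝ, IntervalIntegrable (fun s => g s * k' (u - s)) volume a b :=
    fun a b => (hg.mul (hk'.comp (continuous_const.sub continuous_id))).intervalIntegrable a b
  have split : (∫ s in (0:ℝ)..x, g s * k (x - s)) =
      (∫ s in (0:ℝ)..u, g s * k (x - s)) + ∫ s in u..x, g s * k (x - s) :=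
    (intervalIntegral.integral_add_adjacent_intervals (int1 0 u) (int1 u x)).symm
  have t1 : ‖(∫ s in u..x, g s * k (x - s)) - (x - u) * (g u * k 0)‖ ≤ ε * |x - u| := by
    have e1 : (x - u) * (g u * k 0) = ∫ s in u..x, g u * k 0 := by
      simp [intervalIntegral.integral_const]; ring
    rw [e1, ← intervalIntegral.integral_sub (int1 u x)
      _root_.intervalIntegrable_const]
    have hb : ∀ s ∈ Set.uIoc u x, ‖g s * k (x - s) - g u * k 0‖ ≤ ε := by
      intro s hs
      obtain ⟨hb1, hb2⟩ := mem_uIoc_bounds hs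
      have hdist : dist ((s, x - s) : ℝ × ℝ) (u, 0) < δ₂ := by
        rw [Prod.dist_eq]
        refine max_lt ?_ ?_
        · rw [Real.dist_eq]; exact lt_of_le_of_lt hb1 hxuδ₂
        · rw [Real.dist_eq]
          exact lt_of_le_of_lt (by simpa using hb2) hxuδ₂
      have := hδ₂ hdist
      rw [Real.dist_eq] at this
      exact le_of_lt this
    exact intervalIntegral.norm_integral_le_of_norm_le_const hb
  have inner_bound : ∀ s, |s| ≤ |u| →
      ‖k (x - s) - k (u - s) - (x - u) * k' (u - s)‖ ≤ ε * |x - u| := by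
    intro s hsu
    have ftc : k (x - s) - k (u - s) = ∫ t in (u-s)..(x-s), k' t :=
      (intervalIntegral.integral_eq_sub_of_hasDerivAt (fun t _ => hk t)
        (hk'.intervalIntegrable _ _)).symm
    have e2 : (x - u) * k' (u - s) = ∫ t in (u-s)..(x-s), k' (u - s) := by
      rw [intervalIntegral.integral_const, smul_eq_mul]; ring
    rw [ftc, e2, ← intervalIntegral.integral_sub (hk'.intervalIntegrable _ _)
      _root_.intervalIntegrable_const]
    have hb : ∀ t ∈ Set.uIoc (u-s) (x-s), ‖k' t - k' (u - s)‖ ≤ ε := by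
      intro t ht
      have ht' : |t - (u - s)| ≤ |x - u| := by
        have := (mem_uIoc_bounds ht).1
        calc |t - (u - s)| ≤ |(x - s) - (u - s)| := this
          _ = |x - u| := by ring_nf
      have htmem : t ∈ Set.Icc (-(2*|u|+2)) (2*|u|+2) := by
        have h1 : |u - s| ≤ 2*|u| := by
          calc |u - s| ≤ |u| + |s| := abs_sub _ _
            _ ≤ 2*|u| := by linarith
        have h2 : |t| ≤ |u - s| + |t - (u-s)| := by
          calc |t| = |(u - s) + (t - (u-s))| := by ring_nf
            _ ≤ |u - s| + |t - (u-s)| := abs_add_le _ _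
        have : |t| ≤ 2*|u| + 1 := by
          have := le_of_lt (lt_of_le_of_lt ht' hxu1); linarith
        exact ⟨by linarith [neg_abs_le t], by linarith [le_abs_self t]⟩
      have humem : u - s ∈ Set.Icc (-(2*|u|+2)) (2*|u|+2) := by
        have h1 : |u - s| ≤ 2*|u| := by
          calc |u - s| ≤ |u| + |s| := abs_sub _ _
            _ ≤ 2*|u| := by linarith
        exact ⟨by linarith [neg_abs_le (u-s)], by linarith [le_abs_self (u-s)]⟩
      have hdist : dist t (u - s) < δ₁ := by
        rw [Real.dist_eq]; exact lt_of_le_of_lt ht' hxuδ₁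
      have := hδ₁ t htmem (u - s) humem hdist
      rw [Real.dist_eq] at this
      exact le_of_lt this
    have := intervalIntegral.norm_integral_le_of_norm_le_const (a := u - s) (b := x - s) hb
    calc ‖∫ t in (u-s)..(x-s), (k' t - k' (u - s))‖ ≤ ε * |x - s - (u - s)| := this
      _ = ε * |x - u| := by ring_nf
  have t2 : ‖(∫ s in (0:ℝ)..u, g s * k (x - s)) - (∫ s in (0:ℝ)..u, g s * k (u - s))
      - (x - u) * ∫ s in (0:ℝ)..u, g s * k' (u - s)‖ ≤ Mg * (ε * |x - u|) * |u| := by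
    have e3 : (x - u) * ∫ s in (0:ℝ)..u, g s * k' (u - s)
        = ∫ s in (0:ℝ)..u, (x - u) * (g s * k' (u - s)) := by
      rw [intervalIntegral.integral_const_mul]
    rw [e3, ← intervalIntegral.integral_sub (int1 0 u) (int2 0 u),
      ← intervalIntegral.integral_sub ((int1 0 u).sub (int2 0 u)) ((int3 0 u).const_mul _)]
    have hb : ∀ s ∈ Set.uIoc (0:ℝ) u,
        ‖g s * k (x - s) - g s * k (u - s) - (x - u) * (g s * k' (u - s))‖
          ≤ Mg * (ε * |x - u|) := by
      intro s hs
      have hsu : |s| ≤ |u| := by simpa using (mem_uIoc_bounds hs).1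
      have hgs : |g s| ≤ Mg := hMg s ⟨by linarith [neg_abs_le s], by linarith [le_abs_self s]⟩
      have he : g s * k (x - s) - g s * k (u - s) - (x - u) * (g s * k' (u - s))
          = g s * (k (x - s) - k (u - s) - (x - u) * k' (u - s)) := by ring
      rw [he, norm_mul]
      exact mul_le_mul hgs (inner_bound s hsu) (norm_nonneg _) hMg0
    have := intervalIntegral.norm_integral_le_of_norm_le_const hb
    simpa using this
  have key : (∫ s in (0:ℝ)..x, g s * k (x - s)) - (∫ s in (0:ℝ)..u, g s * k (u - s)) - (x - u) • D
      = ((∫ s in u..x, g s * k (x - s)) - (x - u) * (g u * k 0))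
        + ((∫ s in (0:ℝ)..u, g s * k (x - s)) - (∫ s in (0:ℝ)..u, g s * k (u - s))
          - (x - u) * ∫ s in (0:ℝ)..u, g s * k' (u - s)) := by
    rw [split, hD, smul_eq_mul]; ring
  rw [key]
  refine le_trans (norm_add_le _ _) (le_trans (add_le_add t1 t2) ?_)
  have hstep : ε * |x - u| + Mg * (ε * |x - u|) * |u| ≤ ε * C * |x - u| := by
    rw [hC]
    have expand : ε * (1 + Mg * (|u| + 1)) * |x - u|
        = ε * |x - u| + Mg * (ε * |x - u|) * |u| + Mg * (ε * |x - u|) := by ring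
    rw [expand]
    have : 0 ≤ Mg * (ε * |x - u|) := mul_nonneg hMg0 (mul_nonneg hεpos.le (abs_nonneg _))
    linarith
  refine le_trans hstep (le_of_eq ?_)
  rw [hε, Real.norm_eq_abs]
  field_simp

/-- under the same renewal hypotheses as Statement 2, for all `u > 0`,
`m''(u) = φ(∫₀^u m'(u-y) f'(y) dy + m(0) f'(u) + m'(u) f(0)) + v''(u)`, and
`m''(0⁺) = φ(v(0) f'(0) + m'(0) f(0)) + v''(0)` where `m'(0) = φ v(0) f(0) + v'(0)`. -/
theorem stmt_3 (φ : ℝ) (hφ0 : 0 < φ) (hφ1 : φ < 1)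
    (f F v m : ℝ → ℝ)
    (hf_nonneg : ∀ u : ℝ, 0 < u → 0 ≤ f u)
    (hf_integrable : MeasureTheory.IntegrableOn f (Set.Ioi 0))
    (hf_total : ∫ y in Set.Ioi (0:ℝ), f y = 1)
    (hF_def : ∀ u : ℝ, 0 ≤ u → F u = ∫ y in (0:ℝ)..u, f y)
    (hFf : ∀ u : ℝ, 0 < u → HasDerivAt F (f u) u)
    (hv_loc : ∀ x : ℝ, 0 < x → ∃ M, ∀ u ∈ Set.Icc (0:ℝ) x, |v u| ≤ M)
    (hm_loc : ∀ x : ℝ, 0 < x → ∃ M, ∀ u ∈ Set.Icc (0:ℝ) x, |m u| ≤ M)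
    (hm_eq : ∀ u : ℝ, 0 ≤ u →
      m u = φ * (∫ y in (0:ℝ)..u, m (u - y) * f y) + v u)
    (hF_c : ContinuousOn F (Set.Ici 0)) (hF_cd : ContDiffOn ℝ 2 F (Set.Ioi 0))
    (hF_lim : ∀ k ≤ 2, ∃ L, Tendsto (iteratedDeriv k F) (𝓝[>] (0:ℝ)) (𝓝 L))
    (hv_c : ContinuousOn v (Set.Ici 0)) (hv_cd : ContDiffOn ℝ 2 v (Set.Ioi 0))
    (hv_lim : ∀ k ≤ 2, ∃ L, Tendsto (iteratedDeriv k v) (𝓝[>] (0:ℝ)) (𝓝 L))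
    (f0 f'0 v'0 v''0 : ℝ)
    (hf0 : Tendsto f (𝓝[>] (0:ℝ)) (𝓝 f0))
    (hf'0 : Tendsto (deriv f) (𝓝[>] (0:ℝ)) (𝓝 f'0))
    (hv'0 : Tendsto (deriv v) (𝓝[>] (0:ℝ)) (𝓝 v'0))
    (hv''0 : Tendsto (iteratedDeriv 2 v) (𝓝[>] (0:ℝ)) (𝓝 v''0)) :
    (∀ u : ℝ, 0 < u → iteratedDeriv 2 m u
        = φ * ((∫ y in (0:ℝ)..u, deriv m (u - y) * deriv f y)
            + m 0 * deriv f u + deriv m u * f0)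
          + iteratedDeriv 2 v u) ∧
    Tendsto (iteratedDeriv 2 m) (𝓝[>] (0:ℝ))
      (𝓝 (φ * (v 0 * f'0 + (φ * v 0 * f0 + v'0) * f0) + v''0)) := by
  classical
  -- ## f is C¹ on (0,∞)
  have hFd1 : ContDiffOn ℝ 1 (derivWithin F (Set.Ioi 0)) (Set.Ioi 0) :=
    hF_cd.derivWithin isOpen_Ioi.uniqueDiffOn (by norm_num)
  have hFdeq : Set.EqOn (derivWithin F (Set.Ioi 0)) f (Set.Ioi 0) := by
    intro x hx
    rw [derivWithin_of_isOpen isOpen_Ioi hx, (hFf x hx).deriv]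
  have hfC1 : ContDiffOn ℝ 1 f (Set.Ioi 0) := hFd1.congr (fun x hx => (hFdeq hx).symm)
  have hfdiff : DifferentiableOn ℝ f (Set.Ioi 0) := hfC1.differentiableOn (by norm_num)
  have hfder : ∀ x : ℝ, 0 < x → HasDerivAt f (deriv f x) x := fun x hx =>
    ((hfdiff x (Set.mem_Ioi.mpr hx)).differentiableAt (Ioi_mem_nhds hx)).hasDerivAt
  have hf'c : ContinuousOn (deriv f) (Set.Ioi 0) := by
    have h1 : ContDiffOn ℝ 0 (derivWithin f (Set.Ioi 0)) (Set.Ioi 0) :=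
      hfC1.derivWithin isOpen_Ioi.uniqueDiffOn (by norm_num)
    have h2 : Set.EqOn (derivWithin f (Set.Ioi 0)) (deriv f) (Set.Ioi 0) := fun x hx =>
      derivWithin_of_isOpen isOpen_Ioi hx
    exact (h1.congr (fun x hx => (h2 hx).symm)).continuousOn
  -- ## v is C¹ on (0,∞) with continuous second derivative data
  have hvd1 : ContDiffOn ℝ 1 (deriv v) (Set.Ioi 0) := by
    have h1 : ContDiffOn ℝ 1 (derivWithin v (Set.Ioi 0)) (Set.Ioi 0) :=
      hv_cd.derivWithin isOpen_Ioi.uniqueDiffOn (by norm_num)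
    exact h1.congr (fun x hx => (derivWithin_of_isOpen isOpen_Ioi hx).symm)
  have hvdiff : DifferentiableOn ℝ v (Set.Ioi 0) := hv_cd.differentiableOn (by norm_num)
  have hvd : ∀ x : ℝ, 0 < x → HasDerivAt v (deriv v x) x := fun x hx =>
    ((hvdiff x (Set.mem_Ioi.mpr hx)).differentiableAt (Ioi_mem_nhds hx)).hasDerivAt
  have hv'c : ContinuousOn (deriv v) (Set.Ioi 0) := hvd1.continuousOn
  have hv2d : ∀ x : ℝ, 0 < x → HasDerivAt (deriv v) (deriv (deriv v) x) x := fun x hx =>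
    (((hvd1.differentiableOn (by norm_num)) x (Set.mem_Ioi.mpr hx)).differentiableAt
      (Ioi_mem_nhds hx)).hasDerivAt
  -- ## global C¹ extension of f
  obtain ⟨fe, fe', hfe'c, hfeD, hfe_eq, hfe'_eq, hfe0, hfe'0⟩ :=
    ftc_ext f (deriv f) f0 f'0 hfder hf'c hf0 hf'0
  have hfec : Continuous fe := by
    rw [continuous_iff_continuousAt]; exact fun x => (hfeD x).continuousAt
  -- ## measurability and integrability of m
  obtain ⟨hmeasT, hGoodAll⟩ := renewal_meas φ f v m fe hfec hfe_eq hv_c hm_loc hm_eq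
  have hm0val : m 0 = v 0 := by
    have := hm_eq 0 le_rfl
    simpa using this
  -- ## honest representation with continuous kernel
  set U₁ : ℝ → ℝ := fun x => ∫ s in (0:ℝ)..x, m (max s 0) * fe (x - s) with hU₁def
  have hrep : ∀ u : ℝ, 0 ≤ u → m u = v u + φ * U₁ u := by
    intro u hu
    rcases eq_or_lt_of_le hu with hu0 | hu0
    · rw [hU₁def, ← hu0]
      simp [hm0val]
    have h1 := hm_eq u hu
    have h2 : (∫ y in (0:ℝ)..u, m (u - y) * f y) = U₁ u := by
      rw [refl_integral m f u, hU₁def]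
      apply intervalIntegral.integral_congr_ae
      have hgne : ∀ᵐ x : ℝ ∂volume, x ≠ u := by
        rw [ae_iff]
        have : {a : ℝ | ¬ a ≠ u} = {u} := by ext a; simp
        rw [this]; exact Real.volume_singleton
      filter_upwards [hgne] with x hxu hxI
      rw [Set.uIoc_of_le hu0.le] at hxI
      have hx0 : 0 < x := hxI.1
      have hxu' : x < u := lt_of_le_of_ne hxI.2 hxu
      show m x * f (u - x) = m (max x 0) * fe (u - x)
      rw [max_eq_left hx0.le, hfe_eq _ (by linarith : (0:ℝ) < u - x)]
    rw [h2] at h1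
    linarith
  -- ## continuity of m on [0,∞)
  have hmbar_ae : ∀ T : ℝ, 0 < T →
      AEMeasurable (fun s => m (max s 0)) (volume.restrict (Set.Ioo 0 T)) := by
    intro T hT
    refine (hmeasT T hT).congr ?_
    rw [Filter.EventuallyEq, ae_restrict_iff' measurableSet_Ioo]
    refine Filter.Eventually.of_forall (fun s hs => ?_)
    rw [max_eq_left hs.1.le]
  have hU₁cwa : ∀ T : ℝ, 0 < T → ∀ u ∈ Set.Icc (0:ℝ) T,
      ContinuousWithinAt U₁ (Set.Icc 0 T) u := by
    intro T hT u hu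
    obtain ⟨M, hM⟩ := hm_loc T hT
    have hM0 : 0 ≤ M := le_trans (abs_nonneg _) (hM 0 ⟨le_rfl, hT.le⟩)
    refine conv_continuousWithinAt (fun s => m (max s 0)) fe M T hT hM0 hfec
      (hmbar_ae T hT) ?_ u hu
    intro s hs
    show |m (max s 0)| ≤ M
    rw [max_eq_left hs.1.le]
    exact hM s ⟨hs.1.le, hs.2.le⟩
  have hIccmem : ∀ u : ℝ, 0 ≤ u → Set.Icc (0:ℝ) (u+1) ∈ 𝓝[Set.Ici 0] u := by
    intro u hu
    refine Filter.mem_of_superset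
      (Filter.inter_mem (mem_nhdsWithin_of_mem_nhds (Iic_mem_nhds (show u < u + 1 by linarith)))
        self_mem_nhdsWithin) ?_
    intro x hx
    exact ⟨hx.2, hx.1⟩
  have hmcont : ContinuousOn m (Set.Ici 0) := by
    intro u hu
    have hu' : (0:ℝ) ≤ u := hu
    have hcw : ContinuousWithinAt (fun x => v x + φ * U₁ x) (Set.Icc 0 (u+1)) u :=
      ((hv_c u hu).mono (fun x hx => hx.1)).add
        (continuousWithinAt_const.mul (hU₁cwa (u+1) (by linarith) u ⟨hu', by linarith⟩))
    have hcw2 : ContinuousWithinAt m (Set.Icc 0 (u+1)) u :=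
      hcw.congr (fun y hy => hrep y hy.1) (hrep u hu')
    exact hcw2.mono_of_mem_nhdsWithin (hIccmem u hu')
  have hmbarc : Continuous (fun s => m (max s 0)) :=
    hmcont.comp_continuous (continuous_id.max continuous_const)
      (fun x => Set.mem_Ici.mpr (le_max_right x 0))
  -- ## first derivative
  set W₁ : ℝ → ℝ := fun x => ∫ s in (0:ℝ)..x, m (max s 0) * fe' (x - s) with hW₁def
  have hU1D : ∀ u : ℝ, HasDerivAt U₁ (m (max u 0) * fe 0 + W₁ u) u := fun u =>
    conv_hasDerivAt (fun s => m (max s 0)) fe fe' hmbarc hfeD hfe'c u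
  set ρ : ℝ → ℝ := fun x => deriv v x + φ * (m x * f0 + W₁ x) with hρdef
  have hmd : ∀ u : ℝ, 0 < u → HasDerivAt m (ρ u) u := by
    intro u hu
    have h1 : HasDerivAt (fun x => v x + φ * U₁ x) (ρ u) u := by
      have h2 := (hU1D u).const_mul φ
      rw [max_eq_left hu.le, hfe0] at h2
      exact (hvd u hu).add h2
    refine h1.congr_of_eventuallyEq ?_
    filter_upwards [Ioi_mem_nhds hu] with x hx
    exact hrep x (le_of_lt hx)
  have hderiv_m_eq : ∀ u : ℝ, 0 < u → deriv m u = ρ u := fun u hu => (hmd u hu).deriv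
  -- ## continuity of W₁ and ρ
  have hW₁cwa : ∀ T : ℝ, 0 < T → ∀ u ∈ Set.Icc (0:ℝ) T,
      ContinuousWithinAt W₁ (Set.Icc 0 T) u := by
    intro T hT u hu
    obtain ⟨M, hM⟩ := hm_loc T hT
    have hM0 : 0 ≤ M := le_trans (abs_nonneg _) (hM 0 ⟨le_rfl, hT.le⟩)
    refine conv_continuousWithinAt (fun s => m (max s 0)) fe' M T hT hM0 hfe'c
      (hmbar_ae T hT) ?_ u hu
    intro s hs
    show |m (max s 0)| ≤ M
    rw [max_eq_left hs.1.le]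
    exact hM s ⟨hs.1.le, hs.2.le⟩
  have hρc : ContinuousOn ρ (Set.Ioi 0) := by
    intro u hu
    have hu0 : (0:ℝ) < u := hu
    have hIoimem : Set.Icc (0:ℝ) (u+1) ∈ 𝓝[Set.Ioi 0] u := by
      refine Filter.mem_of_superset
        (Filter.inter_mem (mem_nhdsWithin_of_mem_nhds (Iic_mem_nhds (show u < u + 1 by linarith)))
          self_mem_nhdsWithin) ?_
      intro x hx
      exact ⟨le_of_lt hx.2, hx.1⟩
    have hW : ContinuousWithinAt W₁ (Set.Ioi 0) u :=
      (hW₁cwa (u+1) (by linarith) u ⟨hu0.le, by linarith⟩).mono_of_mem_nhdsWithin hIoimem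
    have hm' : ContinuousWithinAt m (Set.Ioi 0) u :=
      (hmcont u hu0.le).mono Set.Ioi_subset_Ici_self
    exact ((hv'c u hu).add
      (continuousWithinAt_const.mul ((hm'.mul continuousWithinAt_const).add hW)))
  -- ## limits at 0⁺
  have hmt : Tendsto m (𝓝[>] (0:ℝ)) (𝓝 (v 0)) := by
    have := (hmcont 0 Set.self_mem_Ici).tendsto
    rw [hm0val] at this
    exact this.mono_left (nhdsWithin_mono _ Set.Ioi_subset_Ici_self)
  have hW₁0 : Tendsto W₁ (𝓝[>] (0:ℝ)) (𝓝 0) := by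
    obtain ⟨M, hM⟩ := hm_loc 1 one_pos
    have hM0 : 0 ≤ M := le_trans (abs_nonneg _) (hM 0 ⟨le_rfl, one_pos.le⟩)
    obtain ⟨K, hK⟩ : ∃ K : ℝ, ∀ t ∈ Set.Icc (0:ℝ) 1, |fe' t| ≤ K := by
      obtain ⟨K, hK⟩ := (isCompact_Icc (a := (0:ℝ)) (b := 1)).exists_bound_of_continuousOn
        hfe'c.continuousOn
      exact ⟨K, by simpa using hK⟩
    have hK0 : 0 ≤ K := le_trans (abs_nonneg _) (hK 0 ⟨le_rfl, one_pos.le⟩)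
    refine squeeze_zero_norm' (a := fun u => M * K * |u|) ?_ ?_
    · filter_upwards [Ioo_mem_nhdsGT_of_mem (Set.left_mem_Ico.mpr one_pos)] with u hu
      have hb : ∀ s ∈ Set.uIoc (0:ℝ) u, ‖m (max s 0) * fe' (u - s)‖ ≤ M * K := by
        intro s hs
        rw [Set.uIoc_of_le hu.1.le] at hs
        rw [Real.norm_eq_abs, abs_mul, max_eq_left hs.1.le]
        have h1 : |m s| ≤ M := hM s ⟨hs.1.le, le_trans hs.2 hu.2.le⟩
        have h2 : |fe' (u - s)| ≤ K := hK _ ⟨by linarith [hs.2], by linarith [hs.1, hu.2]⟩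
        exact mul_le_mul h1 h2 (abs_nonneg _) hM0
      have := intervalIntegral.norm_integral_le_of_norm_le_const hb
      calc ‖W₁ u‖ ≤ M * K * |u - 0| := this
        _ = M * K * |u| := by rw [sub_zero]
    · have hc : Continuous (fun u : ℝ => M * K * |u|) :=
        continuous_const.mul continuous_abs
      have := hc.tendsto 0
      simp only [abs_zero, mul_zero] at this
      exact this.mono_left nhdsWithin_le_nhds
  have hρ0 : Tendsto ρ (𝓝[>] (0:ℝ)) (𝓝 (v'0 + φ * (v 0 * f0))) := by
    have h1 : Tendsto (fun x => m x * f0 + W₁ x) (𝓝[>] (0:ℝ)) (𝓝 (v 0 * f0 + 0)) :=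
      (hmt.mul_const f0).add hW₁0
    rw [add_zero] at h1
    exact hv'0.add (h1.const_mul φ)
  -- ## global C¹ extension of m
  obtain ⟨me, me', hme'c, hmeD, hme_eq, hme'_eq, hme0, hme'0⟩ :=
    ftc_ext m ρ (v 0) (v'0 + φ * (v 0 * f0)) hmd hρc hmt hρ0
  -- ## W₁ agrees with a convolution with smooth second factor
  set U₂ : ℝ → ℝ := fun x => ∫ s in (0:ℝ)..x, fe' s * me (x - s) with hU₂def
  have hW₁U₂ : ∀ x : ℝ, 0 ≤ x → W₁ x = U₂ x := by
    intro x hx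
    have hsub := intervalIntegral.integral_comp_sub_left (a := 0) (b := x)
      (fun s => m (max s 0) * fe' (x - s)) x
    simp only [sub_self, sub_zero] at hsub
    rw [hW₁def]
    simp only []
    rw [← hsub]
    apply intervalIntegral.integral_congr
    intro t ht
    rw [Set.uIcc_of_le hx] at ht
    simp only [sub_sub_cancel]
    rcases eq_or_lt_of_le ht.2 with h | h
    · rw [← h, sub_self]
      rw [show ((0:ℝ) ⊔ 0) = 0 from max_self 0, hme0, hm0val]
      ring
    · rw [max_eq_left (by linarith : (0:ℝ) ≤ x - t), hme_eq _ (by linarith : (0:ℝ) < x - t)]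
      ring
  have hU2D : ∀ u : ℝ, HasDerivAt U₂ (fe' u * me 0 + ∫ s in (0:ℝ)..u, fe' s * me' (u - s)) u :=
    fun u => conv_hasDerivAt fe' me me' hfe'c hmeD hme'c u
  -- ## everything about the second derivative at u > 0
  have hd2 : ∀ u : ℝ, 0 < u → HasDerivAt (deriv m)
      (deriv (deriv v) u + φ * (ρ u * f0 + (fe' u * me 0 + ∫ s in (0:ℝ)..u, fe' s * me' (u - s)))) u := by
    intro u hu
    have hW1d : HasDerivAt W₁ (fe' u * me 0 + ∫ s in (0:ℝ)..u, fe' s * me' (u - s)) u := by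
      refine (hU2D u).congr_of_eventuallyEq ?_
      filter_upwards [Ioi_mem_nhds hu] with x hx
      exact hW₁U₂ x (le_of_lt hx)
    have hρd : HasDerivAt ρ
        (deriv (deriv v) u + φ * (ρ u * f0 + (fe' u * me 0 + ∫ s in (0:ℝ)..u, fe' s * me' (u - s)))) u :=
      (hv2d u hu).add ((((hmd u hu).mul_const f0).add hW1d).const_mul φ)
    refine hρd.congr_of_eventuallyEq ?_
    filter_upwards [Ioi_mem_nhds hu] with x hx
    exact hderiv_m_eq x hx
  have hitv : iteratedDeriv 2 v = deriv (deriv v) := by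
    rw [show (2:ℕ) = 1 + 1 from rfl, iteratedDeriv_succ, iteratedDeriv_one]
  have hitm : iteratedDeriv 2 m = deriv (deriv m) := by
    rw [show (2:ℕ) = 1 + 1 from rfl, iteratedDeriv_succ, iteratedDeriv_one]
  have hintcongr : ∀ u : ℝ, 0 < u →
      (∫ s in (0:ℝ)..u, fe' s * me' (u - s)) = ∫ y in (0:ℝ)..u, deriv m (u - y) * deriv f y := by
    intro u hu
    apply intervalIntegral.integral_congr_ae
    have hgne : ∀ᵐ x : ℝ ∂volume, x ≠ u := by
      rw [ae_iff]
      have : {a : ℝ | ¬ a ≠ u} = {u} := by ext a; simp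
      rw [this]; exact Real.volume_singleton
    filter_upwards [hgne] with y hyu hyI
    rw [Set.uIoc_of_le hu.le] at hyI
    have hy0 : 0 < y := hyI.1
    have hyu' : y < u := lt_of_le_of_ne hyI.2 hyu
    have huy : (0:ℝ) < u - y := by linarith
    rw [hfe'_eq y hy0, hme'_eq _ huy, ← hderiv_m_eq _ huy]
    ring
  have part1 : ∀ u : ℝ, 0 < u → iteratedDeriv 2 m u
      = φ * ((∫ y in (0:ℝ)..u, deriv m (u - y) * deriv f y)
          + m 0 * deriv f u + deriv m u * f0) + iteratedDeriv 2 v u := by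
    intro u hu
    rw [hitm, hitv, (hd2 u hu).deriv, hintcongr u hu, hme0, ← hm0val,
      hfe'_eq u hu, ← hderiv_m_eq u hu]
    ring
  refine ⟨part1, ?_⟩
  -- ## the limit of the second derivative at 0⁺
  have hEeq : iteratedDeriv 2 m =ᶠ[𝓝[>] (0:ℝ)] fun u =>
      deriv (deriv v) u + φ * (ρ u * f0 + (fe' u * me 0 + ∫ s in (0:ℝ)..u, fe' s * me' (u - s))) := by
    filter_upwards [self_mem_nhdsWithin] with u hu
    rw [hitm, (hd2 u hu).deriv]
  rw [hitv] at hv''0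
  have hR0 : Tendsto (fun u => ∫ s in (0:ℝ)..u, fe' s * me' (u - s)) (𝓝[>] (0:ℝ)) (𝓝 0) := by
    obtain ⟨K, hK⟩ : ∃ K : ℝ, ∀ t ∈ Set.Icc (0:ℝ) 1, |fe' t| ≤ K := by
      obtain ⟨K, hK⟩ := (isCompact_Icc (a := (0:ℝ)) (b := 1)).exists_bound_of_continuousOn
        hfe'c.continuousOn
      exact ⟨K, by simpa using hK⟩
    have hK0 : 0 ≤ K := le_trans (abs_nonneg _) (hK 0 ⟨le_rfl, one_pos.le⟩)
    obtain ⟨P, hP⟩ : ∃ P : ℝ, ∀ t ∈ Set.Icc (0:ℝ) 1, |me' t| ≤ P := by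
      obtain ⟨P, hP⟩ := (isCompact_Icc (a := (0:ℝ)) (b := 1)).exists_bound_of_continuousOn
        hme'c.continuousOn
      exact ⟨P, by simpa using hP⟩
    have hP0 : 0 ≤ P := le_trans (abs_nonneg _) (hP 0 ⟨le_rfl, one_pos.le⟩)
    refine squeeze_zero_norm' (a := fun u => K * P * |u|) ?_ ?_
    · filter_upwards [Ioo_mem_nhdsGT_of_mem (Set.left_mem_Ico.mpr one_pos)] with u hu
      have hb : ∀ s ∈ Set.uIoc (0:ℝ) u, ‖fe' s * me' (u - s)‖ ≤ K * P := by
        intro s hs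
        rw [Set.uIoc_of_le hu.1.le] at hs
        rw [Real.norm_eq_abs, abs_mul]
        have h1 : |fe' s| ≤ K := hK s ⟨hs.1.le, le_trans hs.2 hu.2.le⟩
        have h2 : |me' (u - s)| ≤ P := hP _ ⟨by linarith [hs.2], by linarith [hs.1, hu.2]⟩
        exact mul_le_mul h1 h2 (abs_nonneg _) hK0
      have := intervalIntegral.norm_integral_le_of_norm_le_const hb
      calc ‖∫ s in (0:ℝ)..u, fe' s * me' (u - s)‖ ≤ K * P * |u - 0| := this
        _ = K * P * |u| := by rw [sub_zero]
    · have hc : Continuous (fun u : ℝ => K * P * |u|) :=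
        continuous_const.mul continuous_abs
      have := hc.tendsto 0
      simp only [abs_zero, mul_zero] at this
      exact this.mono_left nhdsWithin_le_nhds
  have hfe'lim : Tendsto fe' (𝓝[>] (0:ℝ)) (𝓝 f'0) := by
    have := (hfe'c.tendsto 0)
    rw [hfe'0] at this
    exact this.mono_left nhdsWithin_le_nhds
  have hlim : Tendsto (fun u =>
      deriv (deriv v) u + φ * (ρ u * f0 + (fe' u * me 0 + ∫ s in (0:ℝ)..u, fe' s * me' (u - s))))
      (𝓝[>] (0:ℝ))
      (𝓝 (v''0 + φ * ((v'0 + φ * (v 0 * f0)) * f0 + (f'0 * me 0 + 0)))) :=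
    hv''0.add ((((hρ0.mul_const f0).add
      ((hfe'lim.mul_const (me 0)).add hR0))).const_mul φ)
  have : (v''0 + φ * ((v'0 + φ * (v 0 * f0)) * f0 + (f'0 * me 0 + 0)))
      = φ * (v 0 * f'0 + (φ * v 0 * f0 + v'0) * f0) + v''0 := by
    rw [hme0]
    ring
  rw [this] at hlim
  exact Tendsto.congr' hEeq.symm hlim
end

section
/- Let 0 < φ < 1, let m₁, v₁ : [0,∞) → ℝ be continuous, let f₁ : (0,∞) → ℝ be continuous, and let m₂ : (0,∞) → ℝ satisfy m₂(u) = φ ∫₀^u m₁(u−y) f₁(y) dy + v₁(u) for all u > 0. If I₀(f₁), I₁(f₁), I₂(f₁) are all finite, then for every x > 0: sup_{u ∈ [0,x]} |u² m₂(u)| ≤ φ ( I₀(f₁) · sup_{u ∈ [0,x]} |u² m₁(u)| + 2 I₁(f₁) · sup_{u ∈ [0,x]} |u m₁(u)| + I₂(f₁) · sup_{u ∈ [0,x]} |m₁(u)| ) + sup_{u ∈ [0,∞)} |u² v₁(u)|. -/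
open MeasureTheory Filter Topology
open scoped ENNReal

/-- if `m₂(u) = φ ∫₀^u m₁(u-y) f₁(y) dy + v₁(u)` for `u > 0`, with
`m₁, v₁` continuous on `[0,∞)`, `f₁` continuous on `(0,∞)`, and
`I₀(f₁), I₁(f₁), I₂(f₁) < ∞`, then for every `x > 0`,
`sup_{[0,x]} |u² m₂(u)| ≤ φ (I₀ sup_{[0,x]} |u² m₁(u)| + 2 I₁ sup_{[0,x]} |u m₁(u)|
 + I₂ sup_{[0,x]} |m₁|) + ‖u² v₁(u)‖` (computed in `ℝ≥0∞`). -/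
theorem stmt_7 (φ : ℝ) (hφ0 : 0 < φ) (hφ1 : φ < 1)
    (m₁ v₁ f₁ m₂ : ℝ → ℝ)
    (hm₁ : ContinuousOn m₁ (Set.Ici 0))
    (hv₁ : ContinuousOn v₁ (Set.Ici 0))
    (hf₁ : ContinuousOn f₁ (Set.Ioi 0))
    (heq : ∀ u : ℝ, 0 < u →
      m₂ u = φ * (∫ y in (0:ℝ)..u, m₁ (u - y) * f₁ y) + v₁ u)
    (hI0 : MeasureTheory.IntegrableOn (fun y => |f₁ y|) (Set.Ioi 0))
    (hI1 : MeasureTheory.IntegrableOn (fun y => y * |f₁ y|) (Set.Ioi 0))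
    (hI2 : MeasureTheory.IntegrableOn (fun y => y ^ 2 * |f₁ y|) (Set.Ioi 0)) :
    ∀ x : ℝ, 0 < x →
      (⨆ u ∈ Set.Ioc (0:ℝ) x, (‖u ^ 2 * m₂ u‖₊ : ℝ≥0∞)) ≤
        ENNReal.ofReal φ *
            (ENNReal.ofReal (∫ y in Set.Ioi (0:ℝ), |f₁ y|)
                * (⨆ u ∈ Set.Icc (0:ℝ) x, (‖u ^ 2 * m₁ u‖₊ : ℝ≥0∞))
              + 2 * ENNReal.ofReal (∫ y in Set.Ioi (0:ℝ), y * |f₁ y|)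
                * (⨆ u ∈ Set.Icc (0:ℝ) x, (‖u * m₁ u‖₊ : ℝ≥0∞))
              + ENNReal.ofReal (∫ y in Set.Ioi (0:ℝ), y ^ 2 * |f₁ y|)
                * (⨆ u ∈ Set.Icc (0:ℝ) x, (‖m₁ u‖₊ : ℝ≥0∞)))
          + ⨆ u ∈ Set.Ici (0:ℝ), (‖u ^ 2 * v₁ u‖₊ : ℝ≥0∞) := by
  intro x hx
  have hmem0 : (0:ℝ) ∈ Set.Icc (0:ℝ) x := Set.left_mem_Icc.2 hx.le
  have hIcc : Set.Icc (0:ℝ) x ⊆ Set.Ici 0 := Set.Icc_subset_Ici_self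
  -- maximizers
  obtain ⟨a₂, ha₂, hmax₂⟩ := (isCompact_Icc (a:=(0:ℝ)) (b:=x)).exists_isMaxOn
    ⟨0, hmem0⟩ (((continuous_pow 2).continuousOn.mul (hm₁.mono hIcc)).abs)
  obtain ⟨a₁, ha₁, hmax₁⟩ := (isCompact_Icc (a:=(0:ℝ)) (b:=x)).exists_isMaxOn
    ⟨0, hmem0⟩ (show ContinuousOn (fun u : ℝ => |u * m₁ u|) (Set.Icc 0 x) from
      (continuousOn_id.mul (hm₁.mono hIcc)).abs)
  obtain ⟨a₀, ha₀, hmax₀⟩ := (isCompact_Icc (a:=(0:ℝ)) (b:=x)).exists_isMaxOn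
    ⟨0, hmem0⟩ ((hm₁.mono hIcc).abs)
  set s2 : ℝ := |a₂ ^ 2 * m₁ a₂| with hs2def
  set s1 : ℝ := |a₁ * m₁ a₁| with hs1def
  set s0 : ℝ := |m₁ a₀| with hs0def
  have hs2 : 0 ≤ s2 := abs_nonneg _
  have hs1 : 0 ≤ s1 := abs_nonneg _
  have hs0 : 0 ≤ s0 := abs_nonneg _
  set A : ℝ := ∫ y in Set.Ioi (0:ℝ), |f₁ y| with hAdef
  set B : ℝ := ∫ y in Set.Ioi (0:ℝ), y * |f₁ y| with hBdef
  set C : ℝ := ∫ y in Set.Ioi (0:ℝ), y ^ 2 * |f₁ y| with hCdef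
  have hA : 0 ≤ A := setIntegral_nonneg measurableSet_Ioi (fun y _ => abs_nonneg _)
  have hB : 0 ≤ B := setIntegral_nonneg measurableSet_Ioi
    (fun y hy => mul_nonneg (le_of_lt hy) (abs_nonneg _))
  have hC : 0 ≤ C := setIntegral_nonneg measurableSet_Ioi
    (fun y hy => mul_nonneg (sq_nonneg _) (abs_nonneg _))
  -- bound function
  set G : ℝ → ℝ := fun y => s2 * |f₁ y| + 2 * s1 * (y * |f₁ y|) + s0 * (y ^ 2 * |f₁ y|)
    with hGdef
  have hG : IntegrableOn G (Set.Ioi 0) :=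
    ((hI0.const_mul s2).add (hI1.const_mul (2 * s1))).add (hI2.const_mul s0)
  have hadd01 : IntegrableOn (fun y => s2 * |f₁ y| + 2 * s1 * (y * |f₁ y|)) (Set.Ioi 0) :=
    (hI0.const_mul s2).add (hI1.const_mul (2 * s1))
  have hGval : ∫ y in Set.Ioi (0:ℝ), G y = s2 * A + 2 * s1 * B + s0 * C := by
    simp only [hGdef, integral_add hadd01 (hI2.const_mul s0),
      integral_add (hI0.const_mul s2) (hI1.const_mul (2 * s1)),
      integral_const_mul]
    rfl
  -- the key real bound
  have key : ∀ u ∈ Set.Ioc (0:ℝ) x,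
      |u ^ 2 * m₂ u| ≤ φ * (s2 * A + 2 * s1 * B + s0 * C) + |u ^ 2 * v₁ u| := by
    intro u hu
    have hu0 : 0 < u := hu.1
    have hux : u ≤ x := hu.2
    have hInt1 : |∫ y in (0:ℝ)..u, u ^ 2 * (m₁ (u - y) * f₁ y)|
        ≤ ∫ y in Set.Ioc (0:ℝ) u, |u ^ 2 * (m₁ (u - y) * f₁ y)| := by
      rw [intervalIntegral.integral_of_le hu0.le]
      simpa only [Real.norm_eq_abs] using
        norm_integral_le_integral_norm (fun y => u ^ 2 * (m₁ (u - y) * f₁ y))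
          (μ := volume.restrict (Set.Ioc 0 u))
    have hInt2 : ∫ y in Set.Ioc (0:ℝ) u, |u ^ 2 * (m₁ (u - y) * f₁ y)|
        ≤ ∫ y in Set.Ioc (0:ℝ) u, G y := by
      apply integral_mono_of_nonneg
      · exact Eventually.of_forall (fun y => abs_nonneg _)
      · exact hG.mono_set Set.Ioc_subset_Ioi_self
      · rw [EventuallyLE, ae_restrict_iff' measurableSet_Ioc]
        refine Eventually.of_forall (fun y hy => ?_)
        simp only [hGdef]
        have hy0 : 0 < y := hy.1
        have hyu : y ≤ u := hy.2
        have huy0 : 0 ≤ u - y := by linarith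
        have huyx : u - y ≤ x := by linarith
        have hmemuy : u - y ∈ Set.Icc (0:ℝ) x := ⟨huy0, huyx⟩
        have e2 : (u - y) ^ 2 * |m₁ (u - y)| ≤ s2 := by
          have := isMaxOn_iff.mp hmax₂ _ hmemuy
          simp only [Pi.mul_apply] at this
          rwa [abs_mul, abs_pow, abs_of_nonneg huy0] at this
        have e1 : (u - y) * |m₁ (u - y)| ≤ s1 := by
          have := isMaxOn_iff.mp hmax₁ _ hmemuy
          rwa [abs_mul, abs_of_nonneg huy0] at this
        have e0 : |m₁ (u - y)| ≤ s0 := isMaxOn_iff.mp hmax₀ _ hmemuy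
        have hF0 : 0 ≤ |f₁ y| := abs_nonneg _
        have hM0 : 0 ≤ |m₁ (u - y)| := abs_nonneg _
        rw [abs_mul, abs_mul, abs_of_nonneg (sq_nonneg u)]
        have h2 : (u - y) ^ 2 * |m₁ (u - y)| * |f₁ y| ≤ s2 * |f₁ y| :=
          mul_le_mul_of_nonneg_right e2 hF0
        have h1 : (u - y) * |m₁ (u - y)| * |f₁ y| ≤ s1 * |f₁ y| :=
          mul_le_mul_of_nonneg_right e1 hF0
        have h0 : |m₁ (u - y)| * |f₁ y| ≤ s0 * |f₁ y| :=
          mul_le_mul_of_nonneg_right e0 hF0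
        have t1 : y * ((u - y) * |m₁ (u - y)| * |f₁ y|) ≤ y * (s1 * |f₁ y|) :=
          mul_le_mul_of_nonneg_left h1 hy0.le
        have t0 : y ^ 2 * (|m₁ (u - y)| * |f₁ y|) ≤ y ^ 2 * (s0 * |f₁ y|) :=
          mul_le_mul_of_nonneg_left h0 (sq_nonneg y)
        have expand : u ^ 2 * (|m₁ (u - y)| * |f₁ y|)
            = (u - y) ^ 2 * |m₁ (u - y)| * |f₁ y|
              + 2 * (y * ((u - y) * |m₁ (u - y)| * |f₁ y|))
              + y ^ 2 * (|m₁ (u - y)| * |f₁ y|) := by ring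
        have r1 : y * (s1 * |f₁ y|) = s1 * (y * |f₁ y|) := by ring
        have r0 : y ^ 2 * (s0 * |f₁ y|) = s0 * (y ^ 2 * |f₁ y|) := by ring
        linarith [h2, t1, t0]
    have hInt3 : ∫ y in Set.Ioc (0:ℝ) u, G y ≤ ∫ y in Set.Ioi (0:ℝ), G y := by
      apply setIntegral_mono_set hG
      · rw [EventuallyLE, ae_restrict_iff' measurableSet_Ioi]
        refine Eventually.of_forall (fun y hy => ?_)
        have hy0 : (0:ℝ) < y := hy
        have : (0:ℝ) ≤ |f₁ y| := abs_nonneg _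
        rw [hGdef]
        positivity
      · exact HasSubset.Subset.eventuallyLE Set.Ioc_subset_Ioi_self
    have hmain : |u ^ 2 * (∫ y in (0:ℝ)..u, m₁ (u - y) * f₁ y)|
        ≤ s2 * A + 2 * s1 * B + s0 * C := by
      rw [← intervalIntegral.integral_const_mul]
      calc |∫ y in (0:ℝ)..u, u ^ 2 * (m₁ (u - y) * f₁ y)|
          ≤ ∫ y in Set.Ioc (0:ℝ) u, |u ^ 2 * (m₁ (u - y) * f₁ y)| := hInt1
        _ ≤ ∫ y in Set.Ioc (0:ℝ) u, G y := hInt2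
        _ ≤ ∫ y in Set.Ioi (0:ℝ), G y := hInt3
        _ = s2 * A + 2 * s1 * B + s0 * C := hGval
    have := heq u hu0
    calc |u ^ 2 * m₂ u|
        = |φ * (u ^ 2 * (∫ y in (0:ℝ)..u, m₁ (u - y) * f₁ y)) + u ^ 2 * v₁ u| := by
          rw [this]; congr 1; ring
      _ ≤ |φ * (u ^ 2 * (∫ y in (0:ℝ)..u, m₁ (u - y) * f₁ y))| + |u ^ 2 * v₁ u| :=
          abs_add_le _ _
      _ ≤ φ * (s2 * A + 2 * s1 * B + s0 * C) + |u ^ 2 * v₁ u| := by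
          rw [abs_mul, abs_of_nonneg hφ0.le]
          exact add_le_add_left (mul_le_mul_of_nonneg_left hmain hφ0.le) _
  -- assemble in ℝ≥0∞
  refine iSup₂_le fun u hu => ?_
  have hofReal : ∀ r : ℝ, (‖r‖₊ : ℝ≥0∞) = ENNReal.ofReal |r| := fun r => by
    rw [← Real.norm_eq_abs, ofReal_norm, enorm_eq_nnnorm]
  have hS2 : ENNReal.ofReal s2 ≤ ⨆ w ∈ Set.Icc (0:ℝ) x, (‖w ^ 2 * m₁ w‖₊ : ℝ≥0∞) := by
    rw [hs2def, ← hofReal]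
    exact le_iSup₂ (f := fun w (_ : w ∈ Set.Icc (0:ℝ) x) => (‖w ^ 2 * m₁ w‖₊ : ℝ≥0∞)) a₂ ha₂
  have hS1 : ENNReal.ofReal s1 ≤ ⨆ w ∈ Set.Icc (0:ℝ) x, (‖w * m₁ w‖₊ : ℝ≥0∞) := by
    rw [hs1def, ← hofReal]
    exact le_iSup₂ (f := fun w (_ : w ∈ Set.Icc (0:ℝ) x) => (‖w * m₁ w‖₊ : ℝ≥0∞)) a₁ ha₁
  have hS0 : ENNReal.ofReal s0 ≤ ⨆ w ∈ Set.Icc (0:ℝ) x, (‖m₁ w‖₊ : ℝ≥0∞) := by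
    rw [hs0def, ← hofReal]
    exact le_iSup₂ (f := fun w (_ : w ∈ Set.Icc (0:ℝ) x) => (‖m₁ w‖₊ : ℝ≥0∞)) a₀ ha₀
  have hV : (‖u ^ 2 * v₁ u‖₊ : ℝ≥0∞) ≤ ⨆ w ∈ Set.Ici (0:ℝ), (‖w ^ 2 * v₁ w‖₊ : ℝ≥0∞) :=
    le_iSup₂ (f := fun w (_ : w ∈ Set.Ici (0:ℝ)) => (‖w ^ 2 * v₁ w‖₊ : ℝ≥0∞)) u hu.1.le
  calc (‖u ^ 2 * m₂ u‖₊ : ℝ≥0∞)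
      = ENNReal.ofReal |u ^ 2 * m₂ u| := hofReal _
    _ ≤ ENNReal.ofReal (φ * (s2 * A + 2 * s1 * B + s0 * C) + |u ^ 2 * v₁ u|) :=
        ENNReal.ofReal_le_ofReal (key u hu)
    _ = ENNReal.ofReal (φ * (s2 * A + 2 * s1 * B + s0 * C))
          + ENNReal.ofReal |u ^ 2 * v₁ u| := by
        rw [ENNReal.ofReal_add (by positivity) (abs_nonneg _)]
    _ = ENNReal.ofReal φ *
          (ENNReal.ofReal A * ENNReal.ofReal s2
            + 2 * ENNReal.ofReal B * ENNReal.ofReal s1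
            + ENNReal.ofReal C * ENNReal.ofReal s0)
          + (‖u ^ 2 * v₁ u‖₊ : ℝ≥0∞) := by
        rw [← hofReal]
        congr 1
        rw [ENNReal.ofReal_mul hφ0.le]
        congr 1
        rw [ENNReal.ofReal_add (by positivity) (by positivity),
          ENNReal.ofReal_add (by positivity) (by positivity),
          ENNReal.ofReal_mul hs2, ENNReal.ofReal_mul (by positivity : (0:ℝ) ≤ 2 * s1),
          ENNReal.ofReal_mul (by norm_num : (0:ℝ) ≤ 2), ENNReal.ofReal_mul hs0,
          ENNReal.ofReal_ofNat]
        ring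
    _ ≤ _ := by gcongr
end

section
/- Consider the classical risk model where the claim amounts X are positive random variables with distribution function F_X, mean μ = E[X] > 0, and 0 < φ < 1. Assume F_X is three times continuously differentiable on (0,∞), continuous on [0,∞), and: (a) E[X³] < ∞; (b) lim_{u↓0} F_X'(u) exists and is finite; (c) ∫₀^∞ u^i |F_X''(u)| du < ∞ for i = 0, 2; (d) sup_u |u²(1−F_X(u))| < ∞ and sup_u |u² F_X^{(i)}(u)| < ∞ for i = 1, 2, 3. Define f(u) := (1−F_X(u))/μ, F(u) := ∫₀^u f(y) dy, and v(u) := φ(1−F(u)). Then the pair (F, v) satisfies: (1) the random variable Z with density f has finite variance; (2) F and v belong to C²₀([0,∞)); (3) f' and v'' belong to C²([0,∞)); (4) I₀(f'') < ∞ and I₂(f'') < ∞; (5) sup_u |u² w₁(u)| < ∞ and sup_u |u² w₂(u)| < ∞; (6) sup_u |u² w₁''(u)| < ∞ and sup_u |u² w₂''(u)| < ∞, where w₁(u) := φ v(0) f(u) + v'(u) and w₂(u) := φ (φ v(0) f(0) + v'(0)) f(u) + w₁'(u). -/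
open MeasureTheory Filter Topology

private lemma deriv_congr_Ioi' {g₁ g₂ : ℝ → ℝ} (h : ∀ y ∈ Set.Ioi (0:ℝ), g₁ y = g₂ y)
    {u : ℝ} (hu : u ∈ Set.Ioi (0:ℝ)) : deriv g₁ u = deriv g₂ u :=
  Filter.EventuallyEq.deriv_eq (Filter.eventuallyEq_of_mem (isOpen_Ioi.mem_nhds hu) h)

private lemma tendsto_congr_Ioi' {g₁ g₂ : ℝ → ℝ} {c : ℝ}
    (h : ∀ y ∈ Set.Ioi (0:ℝ), g₁ y = g₂ y)
    (ht : Filter.Tendsto g₂ (𝓝[>] (0:ℝ)) (𝓝 c)) : Filter.Tendsto g₁ (𝓝[>] (0:ℝ)) (𝓝 c) :=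
  (ht.congr' (eventually_mem_nhdsWithin.mono fun y hy => (h y hy).symm))

private lemma itd2_eq (g : ℝ → ℝ) : iteratedDeriv 2 g = deriv (deriv g) := by
  rw [show (2:ℕ) = 1 + 1 from rfl, iteratedDeriv_succ, iteratedDeriv_one]

private lemma itd3_eq (g : ℝ → ℝ) : iteratedDeriv 3 g = deriv (deriv (deriv g)) := by
  rw [show (3:ℕ) = 2 + 1 from rfl, iteratedDeriv_succ, itd2_eq]


/-- The function `w₁(u) = φ v(0) f(u) + v'(u)`. -/
noncomputable def w1 (φ : ℝ) (v f : ℝ → ℝ) : ℝ → ℝ :=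
  fun u => φ * v 0 * f u + deriv v u

/-- The function `w₂(u) = φ m'(0) f(u) + w₁'(u)`, where
`m'(0) = φ v(0) f(0) + v'(0)`. -/
noncomputable def w2 (φ f0 v'0 : ℝ) (v f : ℝ → ℝ) : ℝ → ℝ :=
  fun u => φ * (φ * v 0 * f0 + v'0) * f u + deriv (w1 φ v f) u

/-- in the classical risk model with claim distribution `F_X`
(mean `μ > 0`, loading parameter `0 < φ < 1`) satisfying (a) `E[X³] < ∞`,
(b) `F_X'(0⁺)` exists and is finite, (c) `∫₀^∞ u^i |F_X''(u)| du < ∞` for `i = 0, 2`,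
and (d) `‖u²(1 - F_X(u))‖ < ∞`, `‖u² F_X^{(i)}(u)‖ < ∞` for `i = 1, 2, 3`,
the associated renewal data `f(u) = (1 - F_X(u))/μ`, `F(u) = ∫₀^u f`,
`v(u) = φ(1 - F(u))` satisfies conditions (1)-(6) of Proposition 2.4
(Statements 12/13). -/
theorem stmt_15 (φ : ℝ) (hφ0 : 0 < φ) (hφ1 : φ < 1)
    (F_X : ℝ → ℝ) (μ : ℝ)
    (hFX0 : F_X 0 = 0)
    (hFX_mono : MonotoneOn F_X (Set.Ici 0))
    (hFX_top : Tendsto F_X atTop (𝓝 1))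
    (hFX_c : ContinuousOn F_X (Set.Ici 0))
    (hFX_cd : ContDiffOn ℝ 3 F_X (Set.Ioi 0))
    (hμ_int : MeasureTheory.IntegrableOn (fun u => 1 - F_X u) (Set.Ioi 0))
    (hμ : μ = ∫ u in Set.Ioi (0:ℝ), (1 - F_X u))
    (hμ_pos : 0 < μ)
    -- (a) `X` has finite third moment
    (ha : MeasureTheory.IntegrableOn (fun u => u ^ 2 * (1 - F_X u)) (Set.Ioi 0))
    -- (b) `lim_{u↓0} F_X'(u)` exists and is finite
    (hb : ∃ L, Tendsto (deriv F_X) (𝓝[>] (0:ℝ)) (𝓝 L))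
    -- (c) `I_i(F_X'') < ∞` for `i = 0, 2`
    (hc0 : MeasureTheory.IntegrableOn (fun u => |iteratedDeriv 2 F_X u|) (Set.Ioi 0))
    (hc2 : MeasureTheory.IntegrableOn (fun u => u ^ 2 * |iteratedDeriv 2 F_X u|)
      (Set.Ioi 0))
    -- (d) weighted sup bounds for `1 - F_X` and the derivatives of `F_X`
    (hd0 : ∃ M, ∀ u : ℝ, 0 < u → |u ^ 2 * (1 - F_X u)| ≤ M)
    (hd1 : ∃ M, ∀ u : ℝ, 0 < u → |u ^ 2 * deriv F_X u| ≤ M)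
    (hd2 : ∃ M, ∀ u : ℝ, 0 < u → |u ^ 2 * iteratedDeriv 2 F_X u| ≤ M)
    (hd3 : ∃ M, ∀ u : ℝ, 0 < u → |u ^ 2 * iteratedDeriv 3 F_X u| ≤ M)
    -- the associated renewal data
    (f F v : ℝ → ℝ)
    (hf : ∀ u : ℝ, f u = (1 - F_X u) / μ)
    (hF : ∀ u : ℝ, 0 ≤ u → F u = ∫ y in (0:ℝ)..u, f y)
    (hv : ∀ u : ℝ, 0 ≤ u → v u = φ * (1 - F u))
    (v'0 : ℝ) (hv'0 : Tendsto (deriv v) (𝓝[>] (0:ℝ)) (𝓝 v'0)) :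
    -- Condition 1: the equilibrium random variable `Z` has finite variance
    (MeasureTheory.IntegrableOn (fun u => u ^ 2 * f u) (Set.Ioi 0)) ∧
    -- Condition 2: `F` and `v` are in `C²₀([0,∞))`
    (ContinuousOn F (Set.Ici 0) ∧ ContDiffOn ℝ 2 F (Set.Ioi 0) ∧
      (∀ k ≤ 2, ∃ L, Tendsto (iteratedDeriv k F) (𝓝[>] (0:ℝ)) (𝓝 L)) ∧
      ContinuousOn v (Set.Ici 0) ∧ ContDiffOn ℝ 2 v (Set.Ioi 0) ∧
      (∀ k ≤ 2, ∃ L, Tendsto (iteratedDeriv k v) (𝓝[>] (0:ℝ)) (𝓝 L))) ∧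
    -- Condition 3: `f'` and `v''` are in `C²([0,∞))`
    (ContDiffOn ℝ 3 f (Set.Ioi 0) ∧
      (∃ L, Tendsto (deriv f) (𝓝[>] (0:ℝ)) (𝓝 L)) ∧
      ContDiffOn ℝ 4 v (Set.Ioi 0) ∧
      (∃ L, Tendsto (iteratedDeriv 2 v) (𝓝[>] (0:ℝ)) (𝓝 L))) ∧
    -- Condition 4: `I₀(f'') < ∞` and `I₂(f'') < ∞`
    (MeasureTheory.IntegrableOn (fun u => |iteratedDeriv 2 f u|) (Set.Ioi 0) ∧
      MeasureTheory.IntegrableOn (fun u => u ^ 2 * |iteratedDeriv 2 f u|)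
        (Set.Ioi 0)) ∧
    -- Condition 5: `‖u² w₁(u)‖ < ∞` and `‖u² w₂(u)‖ < ∞`
    ((∃ M, ∀ u : ℝ, 0 < u → |u ^ 2 * w1 φ v f u| ≤ M) ∧
      (∃ M, ∀ u : ℝ, 0 < u → |u ^ 2 * w2 φ (f 0) v'0 v f u| ≤ M)) ∧
    -- Condition 6: `‖u² w₁''(u)‖ < ∞` and `‖u² w₂''(u)‖ < ∞`
    ((∃ M, ∀ u : ℝ, 0 < u → |u ^ 2 * iteratedDeriv 2 (w1 φ v f) u| ≤ M) ∧
      (∃ M, ∀ u : ℝ, 0 < u → |u ^ 2 * iteratedDeriv 2 (w2 φ (f 0) v'0 v f) u| ≤ M)) := by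
  obtain ⟨Lb, hbL⟩ := hb
  obtain ⟨M0, hM0⟩ := hd0
  obtain ⟨M1, hM1⟩ := hd1
  obtain ⟨M2, hM2⟩ := hd2
  obtain ⟨M3, hM3⟩ := hd3
  have hfEq : f = fun y => (1 - F_X y) / μ := funext hf
  -- continuity / smoothness of f
  have hf_contOn : ContinuousOn f (Set.Ici 0) := by
    rw [hfEq]; exact (continuousOn_const.sub hFX_c).div_const μ
  have hf_cd : ContDiffOn ℝ 3 f (Set.Ioi 0) := by
    rw [hfEq]; exact (contDiffOn_const.sub hFX_cd).div_const μ
  -- derivatives of F_X on Ioi 0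
  have hFX_d1 : ∀ u ∈ Set.Ioi (0:ℝ), HasDerivAt F_X (deriv F_X u) u := fun u hu =>
    ((hFX_cd.differentiableOn (by norm_num)).differentiableAt
      (isOpen_Ioi.mem_nhds hu)).hasDerivAt
  have cd1 : ContDiffOn ℝ 2 (deriv F_X) (Set.Ioi 0) :=
    hFX_cd.deriv_of_isOpen isOpen_Ioi (by norm_num)
  have hFX_d2 : ∀ u ∈ Set.Ioi (0:ℝ), HasDerivAt (deriv F_X) (deriv (deriv F_X) u) u :=
    fun u hu => ((cd1.differentiableOn (by norm_num)).differentiableAt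
      (isOpen_Ioi.mem_nhds hu)).hasDerivAt
  have cd2 : ContDiffOn ℝ 1 (deriv (deriv F_X)) (Set.Ioi 0) :=
    cd1.deriv_of_isOpen isOpen_Ioi (by norm_num)
  have hFX_d3 : ∀ u ∈ Set.Ioi (0:ℝ),
      HasDerivAt (deriv (deriv F_X)) (deriv (deriv (deriv F_X)) u) u :=
    fun u hu => ((cd2.differentiableOn (by norm_num)).differentiableAt
      (isOpen_Ioi.mem_nhds hu)).hasDerivAt
  -- derivatives of f
  have hfd : ∀ u ∈ Set.Ioi (0:ℝ), HasDerivAt f (-deriv F_X u / μ) u := fun u hu => by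
    rw [hfEq]; exact (HasDerivAt.const_sub 1 (hFX_d1 u hu)).div_const μ
  have hderiv_f : ∀ u ∈ Set.Ioi (0:ℝ), deriv f u = -deriv F_X u / μ :=
    fun u hu => (hfd u hu).deriv
  have hfd2 : ∀ u ∈ Set.Ioi (0:ℝ), HasDerivAt (deriv f) (-deriv (deriv F_X) u / μ) u :=
    fun u hu => (((hFX_d2 u hu).neg).div_const μ).congr_of_eventuallyEq
      (Filter.eventuallyEq_of_mem (isOpen_Ioi.mem_nhds hu) fun y hy => hderiv_f y hy)
  have hderiv2_f : ∀ u ∈ Set.Ioi (0:ℝ),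
      iteratedDeriv 2 f u = -iteratedDeriv 2 F_X u / μ := fun u hu => by
    rw [itd2_eq, itd2_eq]; exact (hfd2 u hu).deriv
  have hfd3 : ∀ u ∈ Set.Ioi (0:ℝ),
      HasDerivAt (deriv (deriv f)) (-deriv (deriv (deriv F_X)) u / μ) u :=
    fun u hu => (((hFX_d3 u hu).neg).div_const μ).congr_of_eventuallyEq
      (Filter.eventuallyEq_of_mem (isOpen_Ioi.mem_nhds hu) fun y hy => (hfd2 y hy).deriv)
  have hderiv3_f : ∀ u ∈ Set.Ioi (0:ℝ),
      iteratedDeriv 3 f u = -iteratedDeriv 3 F_X u / μ := fun u hu => by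
    rw [itd3_eq, itd3_eq]; exact (hfd3 u hu).deriv
  -- F : FTC
  have hFd : ∀ u ∈ Set.Ioi (0:ℝ), HasDerivAt F (f u) u := by
    intro u hu
    have hu' : (0:ℝ) < u := hu
    have hint : IntervalIntegrable f volume 0 u := by
      apply ContinuousOn.intervalIntegrable
      rw [Set.uIcc_of_le hu'.le]
      exact hf_contOn.mono Set.Icc_subset_Ici_self
    have hmeas : StronglyMeasurableAtFilter f (𝓝 u) volume :=
      ContinuousOn.stronglyMeasurableAtFilter isOpen_Ioi hf_cd.continuousOn u hu
    have hcont : ContinuousAt f u :=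
      (hf_cd.continuousOn u hu).continuousAt (isOpen_Ioi.mem_nhds hu)
    exact (intervalIntegral.integral_hasDerivAt_right hint hmeas hcont).congr_of_eventuallyEq
      (Filter.eventuallyEq_of_mem (isOpen_Ioi.mem_nhds hu) fun y hy => hF y (le_of_lt hy))
  have hderiv_F : ∀ u ∈ Set.Ioi (0:ℝ), deriv F u = f u := fun u hu => (hFd u hu).deriv
  have hderiv2_F : ∀ u ∈ Set.Ioi (0:ℝ), iteratedDeriv 2 F u = -deriv F_X u / μ :=
    fun u hu => by
      rw [itd2_eq, deriv_congr_Ioi' hderiv_F hu]; exact hderiv_f u hu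
  -- continuity of F on Ici 0
  have hF_contOn : ContinuousOn F (Set.Ici 0) := by
    intro u hu
    have hu' : (0:ℝ) ≤ u := hu
    have hio : IntegrableOn f (Set.uIcc 0 (u+1)) volume := by
      rw [Set.uIcc_of_le (by linarith)]
      exact (hf_contOn.mono Set.Icc_subset_Ici_self).integrableOn_Icc
    have h1 : ContinuousOn (fun x => ∫ t in (0:ℝ)..x, f t) (Set.Icc 0 (u+1)) := by
      have := intervalIntegral.continuousOn_primitive_interval hio
      rwa [Set.uIcc_of_le (by linarith : (0:ℝ) ≤ u+1)] at this
    have hFcc : ContinuousOn F (Set.Icc 0 (u+1)) := h1.congr fun y hy => hF y hy.1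
    have h2 : ContinuousWithinAt F (Set.Icc 0 (u+1)) u := hFcc u ⟨hu', by linarith⟩
    apply h2.mono_of_mem_nhdsWithin
    rw [show Set.Icc (0:ℝ) (u+1) = Set.Ici 0 ∩ Set.Iic (u+1) from (Set.Ici_inter_Iic).symm]
    exact Filter.inter_mem self_mem_nhdsWithin
      (mem_nhdsWithin_of_mem_nhds (Iic_mem_nhds (by linarith)))
  -- ContDiffOn 4 F
  have hF_cd4 : ContDiffOn ℝ 4 F (Set.Ioi 0) := by
    rw [show (4 : WithTop ℕ∞) = 3 + 1 by norm_num,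
      contDiffOn_succ_iff_deriv_of_isOpen isOpen_Ioi]
    refine ⟨fun u hu => (hFd u hu).differentiableAt.differentiableWithinAt,
      fun h => absurd h (by norm_num), hf_cd.congr hderiv_F⟩
  -- v
  have hF0 : F 0 = 0 := by rw [hF 0 le_rfl, intervalIntegral.integral_same]
  have hv0 : v 0 = φ := by rw [hv 0 le_rfl, hF0]; ring
  have hf0 : f 0 = 1 / μ := by rw [hf 0, hFX0]; norm_num
  have hv_contOn : ContinuousOn v (Set.Ici 0) :=
    (continuousOn_const.mul (continuousOn_const.sub hF_contOn)).congr fun y hy => hv y hy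
  have hv_cd4 : ContDiffOn ℝ 4 v (Set.Ioi 0) :=
    (contDiffOn_const.mul (contDiffOn_const.sub hF_cd4)).congr fun y hy => hv y (le_of_lt hy)
  have hvd : ∀ u ∈ Set.Ioi (0:ℝ), HasDerivAt v (-(φ * f u)) u := by
    intro u hu
    have h1 : HasDerivAt (fun y => φ * (1 - F y)) (φ * -(f u)) u :=
      HasDerivAt.const_mul φ (HasDerivAt.const_sub 1 (hFd u hu))
    rw [show -(φ * f u) = φ * -(f u) by ring]
    exact h1.congr_of_eventuallyEq
      (Filter.eventuallyEq_of_mem (isOpen_Ioi.mem_nhds hu) fun y hy => hv y (le_of_lt hy))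
  have hderiv_v : ∀ u ∈ Set.Ioi (0:ℝ), deriv v u = -(φ * f u) :=
    fun u hu => (hvd u hu).deriv
  have hvd2 : ∀ u ∈ Set.Ioi (0:ℝ),
      HasDerivAt (deriv v) (-(φ * (-deriv F_X u / μ))) u := fun u hu =>
    ((HasDerivAt.const_mul φ (hfd u hu)).neg).congr_of_eventuallyEq
      (Filter.eventuallyEq_of_mem (isOpen_Ioi.mem_nhds hu) fun y hy => hderiv_v y hy)
  have hderiv2_v : ∀ u ∈ Set.Ioi (0:ℝ),
      iteratedDeriv 2 v u = φ * deriv F_X u / μ := fun u hu => by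
    rw [itd2_eq, (hvd2 u hu).deriv]; ring
  -- w1
  have hw1 : ∀ u ∈ Set.Ioi (0:ℝ), w1 φ v f u = (φ * φ - φ) * f u := fun u hu => by
    simp only [w1]; rw [hderiv_v u hu, hv0]; ring
  have hfd' : ∀ u ∈ Set.Ioi (0:ℝ), HasDerivAt f (deriv f u) u := fun u hu => by
    rw [hderiv_f u hu]; exact hfd u hu
  have hw1d : ∀ u ∈ Set.Ioi (0:ℝ),
      HasDerivAt (w1 φ v f) ((φ * φ - φ) * deriv f u) u := fun u hu =>
    (HasDerivAt.const_mul (φ * φ - φ) (hfd' u hu)).congr_of_eventuallyEq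
      (Filter.eventuallyEq_of_mem (isOpen_Ioi.mem_nhds hu) fun y hy => hw1 y hy)
  have hderiv_w1 : ∀ u ∈ Set.Ioi (0:ℝ),
      deriv (w1 φ v f) u = (φ * φ - φ) * deriv f u := fun u hu => (hw1d u hu).deriv
  have hw1d2 : ∀ u ∈ Set.Ioi (0:ℝ),
      HasDerivAt (deriv (w1 φ v f)) ((φ * φ - φ) * (-deriv (deriv F_X) u / μ)) u :=
    fun u hu =>
    (HasDerivAt.const_mul (φ * φ - φ) (hfd2 u hu)).congr_of_eventuallyEq
      (Filter.eventuallyEq_of_mem (isOpen_Ioi.mem_nhds hu) fun y hy => hderiv_w1 y hy)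
  have hderiv2_w1 : ∀ u ∈ Set.Ioi (0:ℝ),
      iteratedDeriv 2 (w1 φ v f) u = (φ * φ - φ) * (-iteratedDeriv 2 F_X u / μ) :=
    fun u hu => by rw [itd2_eq, (hw1d2 u hu).deriv, itd2_eq]
  -- w2
  set c₂ : ℝ := φ * (φ * v 0 * f 0 + v'0) with hc₂
  have hw2 : ∀ u ∈ Set.Ioi (0:ℝ),
      w2 φ (f 0) v'0 v f u = c₂ * f u + (φ * φ - φ) * deriv f u := fun u hu => by
    simp only [w2]; rw [hderiv_w1 u hu]
  have hfd2' : ∀ u ∈ Set.Ioi (0:ℝ), HasDerivAt (deriv f) (deriv (deriv f) u) u :=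
    fun u hu => by rw [(hfd2 u hu).deriv]; exact hfd2 u hu
  have hw2d : ∀ u ∈ Set.Ioi (0:ℝ),
      HasDerivAt (w2 φ (f 0) v'0 v f)
        (c₂ * deriv f u + (φ * φ - φ) * deriv (deriv f) u) u := fun u hu =>
    ((HasDerivAt.const_mul c₂ (hfd' u hu)).add
      (HasDerivAt.const_mul (φ * φ - φ) (hfd2' u hu))).congr_of_eventuallyEq
      (Filter.eventuallyEq_of_mem (isOpen_Ioi.mem_nhds hu) fun y hy => hw2 y hy)
  have hderiv_w2 : ∀ u ∈ Set.Ioi (0:ℝ),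
      deriv (w2 φ (f 0) v'0 v f) u
        = c₂ * deriv f u + (φ * φ - φ) * deriv (deriv f) u :=
    fun u hu => (hw2d u hu).deriv
  have hw2d2 : ∀ u ∈ Set.Ioi (0:ℝ),
      HasDerivAt (deriv (w2 φ (f 0) v'0 v f))
        (c₂ * (-deriv (deriv F_X) u / μ) + (φ * φ - φ) * (-deriv (deriv (deriv F_X)) u / μ)) u :=
    fun u hu =>
    ((HasDerivAt.const_mul c₂ (hfd2 u hu)).add
      (HasDerivAt.const_mul (φ * φ - φ) (hfd3 u hu))).congr_of_eventuallyEq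
      (Filter.eventuallyEq_of_mem (isOpen_Ioi.mem_nhds hu) fun y hy => by
        simp only [Pi.add_apply]; rw [hderiv_w2 y hy, (hfd2 y hy).deriv])
  have hderiv2_w2 : ∀ u ∈ Set.Ioi (0:ℝ),
      iteratedDeriv 2 (w2 φ (f 0) v'0 v f) u
        = c₂ * (-iteratedDeriv 2 F_X u / μ)
          + (φ * φ - φ) * (-iteratedDeriv 3 F_X u / μ) := fun u hu => by
    rw [itd2_eq, (hw2d2 u hu).deriv, itd2_eq, itd3_eq]
  -- abs helpers
  have habs : ∀ a d : ℝ, |a * (-d / μ)| = |a * d| / μ := fun a d => by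
    rw [show a * (-d / μ) = -(a * d) / μ by ring, abs_div, abs_neg, abs_of_pos hμ_pos]
  have habsf : ∀ u : ℝ, |u ^ 2 * f u| = |u ^ 2 * (1 - F_X u)| / μ := fun u => by
    rw [hf u, show u ^ 2 * ((1 - F_X u) / μ) = (u ^ 2 * (1 - F_X u)) / μ by ring,
      abs_div, abs_of_pos hμ_pos]
  refine ⟨?_, ⟨?_, ?_, ?_, ?_, ?_, ?_⟩, ⟨?_, ?_, ?_, ?_⟩, ⟨?_, ?_⟩, ⟨?_, ?_⟩, ⟨?_, ?_⟩⟩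
  -- Condition 1
  · have : (fun u : ℝ => u ^ 2 * f u) = fun u => (u ^ 2 * (1 - F_X u)) / μ :=
      funext fun u => by rw [hf u]; ring
    rw [this]
    exact ha.div_const μ
  -- Condition 2
  · exact hF_contOn
  · exact hF_cd4.of_le (by norm_num)
  · intro k hk
    interval_cases k
    · exact ⟨F 0, by
        rw [iteratedDeriv_zero]
        exact (hF_contOn 0 Set.self_mem_Ici).mono Set.Ioi_subset_Ici_self⟩
    · refine ⟨f 0, ?_⟩
      rw [iteratedDeriv_one]
      exact tendsto_congr_Ioi' hderiv_F
        ((hf_contOn 0 Set.self_mem_Ici).mono Set.Ioi_subset_Ici_self)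
    · exact ⟨-Lb / μ, tendsto_congr_Ioi' hderiv2_F ((hbL.neg).div_const μ)⟩
  · exact hv_contOn
  · exact hv_cd4.of_le (by norm_num)
  · intro k hk
    interval_cases k
    · exact ⟨v 0, by
        rw [iteratedDeriv_zero]
        exact (hv_contOn 0 Set.self_mem_Ici).mono Set.Ioi_subset_Ici_self⟩
    · exact ⟨v'0, by rw [iteratedDeriv_one]; exact hv'0⟩
    · exact ⟨φ * Lb / μ, tendsto_congr_Ioi' hderiv2_v ((hbL.const_mul φ).div_const μ)⟩
  -- Condition 3
  · exact hf_cd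
  · exact ⟨-Lb / μ, tendsto_congr_Ioi' hderiv_f ((hbL.neg).div_const μ)⟩
  · exact hv_cd4
  · exact ⟨φ * Lb / μ, tendsto_congr_Ioi' hderiv2_v ((hbL.const_mul φ).div_const μ)⟩
  -- Condition 4
  · refine MeasureTheory.IntegrableOn.congr_fun (hc0.div_const μ) ?_ measurableSet_Ioi
    intro u hu
    show |iteratedDeriv 2 F_X u| / μ = |iteratedDeriv 2 f u|
    rw [hderiv2_f u hu, abs_div, abs_neg, abs_of_pos hμ_pos]
  · refine MeasureTheory.IntegrableOn.congr_fun (hc2.div_const μ) ?_ measurableSet_Ioi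
    intro u hu
    show u ^ 2 * |iteratedDeriv 2 F_X u| / μ = u ^ 2 * |iteratedDeriv 2 f u|
    rw [hderiv2_f u hu, abs_div, abs_neg, abs_of_pos hμ_pos]
    ring
  -- Condition 5
  · refine ⟨|φ * φ - φ| * (M0 / μ), fun u hu => ?_⟩
    calc |u ^ 2 * w1 φ v f u| = |φ * φ - φ| * |u ^ 2 * f u| := by
          rw [hw1 u hu, show u ^ 2 * ((φ * φ - φ) * f u) = (φ * φ - φ) * (u ^ 2 * f u) by ring,
            abs_mul]
      _ = |φ * φ - φ| * (|u ^ 2 * (1 - F_X u)| / μ) := by rw [habsf]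
      _ ≤ |φ * φ - φ| * (M0 / μ) := by
          gcongr
          exact hM0 u hu
  · refine ⟨|c₂| * (M0 / μ) + |φ * φ - φ| * (M1 / μ), fun u hu => ?_⟩
    have h1 : u ^ 2 * w2 φ (f 0) v'0 v f u
        = c₂ * (u ^ 2 * f u) + (φ * φ - φ) * (u ^ 2 * deriv f u) := by
      rw [hw2 u hu]; ring
    calc |u ^ 2 * w2 φ (f 0) v'0 v f u|
        ≤ |c₂| * |u ^ 2 * f u| + |φ * φ - φ| * |u ^ 2 * deriv f u| := by
          rw [h1]
          exact (abs_add_le _ _).trans (by rw [abs_mul c₂, abs_mul (φ * φ - φ)])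
      _ ≤ |c₂| * (M0 / μ) + |φ * φ - φ| * (M1 / μ) := by
          gcongr
          · rw [habsf]; gcongr; exact hM0 u hu
          · rw [hderiv_f u hu, habs]; gcongr; exact hM1 u hu
  -- Condition 6
  · refine ⟨|φ * φ - φ| * (M2 / μ), fun u hu => ?_⟩
    calc |u ^ 2 * iteratedDeriv 2 (w1 φ v f) u|
        = |φ * φ - φ| * |u ^ 2 * (-iteratedDeriv 2 F_X u / μ)| := by
          rw [hderiv2_w1 u hu, show u ^ 2 * ((φ * φ - φ) * (-iteratedDeriv 2 F_X u / μ))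
            = (φ * φ - φ) * (u ^ 2 * (-iteratedDeriv 2 F_X u / μ)) by ring, abs_mul]
      _ ≤ |φ * φ - φ| * (M2 / μ) := by
          rw [habs]; gcongr; exact hM2 u hu
  · refine ⟨|c₂| * (M2 / μ) + |φ * φ - φ| * (M3 / μ), fun u hu => ?_⟩
    have h1 : u ^ 2 * iteratedDeriv 2 (w2 φ (f 0) v'0 v f) u
        = c₂ * (u ^ 2 * (-iteratedDeriv 2 F_X u / μ))
          + (φ * φ - φ) * (u ^ 2 * (-iteratedDeriv 3 F_X u / μ)) := by
      rw [hderiv2_w2 u hu]; ring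
    calc |u ^ 2 * iteratedDeriv 2 (w2 φ (f 0) v'0 v f) u|
        ≤ |c₂| * |u ^ 2 * (-iteratedDeriv 2 F_X u / μ)|
          + |φ * φ - φ| * |u ^ 2 * (-iteratedDeriv 3 F_X u / μ)| := by
          rw [h1]
          exact (abs_add_le _ _).trans (by rw [abs_mul c₂, abs_mul (φ * φ - φ)])
      _ ≤ |c₂| * (M2 / μ) + |φ * φ - φ| * (M3 / μ) := by
          gcongr
          · rw [habs]; gcongr; exact hM2 u hu
          · rw [habs]; gcongr; exact hM3 u hu
end

section
/- Let X be a nonnegative random variable with distribution function F_X, finite mean μ = E[X] > 0, and Laplace–Stieltjes transform Φ_X(t) = E[e^{−tX}]. Let L be a random variable with density f_L(u) = (1−F_X(u))/μ on [0,∞), with Laplace–Stieltjes transform Φ_L(t) = E[e^{−tL}]. Then for every t > 0 and every natural number k, ((−t)^k / k!) · Φ_L^{(k)}(t) = (1/(tμ)) ( 1 − Σ_{j=0}^{k} ((−1)^j t^j / j!) Φ_X^{(j)}(t) ); equivalently, the discretization L^{•t} of L, defined by P(L^{•t} = k/t) = ((−t)^k/k!) Φ_L^{(k)}(t), satisfies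 P(L^{•t} = k/t) = (1/(tμ)) (1 − Σ_{j=0}^{k} ((−1)^j t^j/j!) Φ_X^{(j)}(t)). -/
open MeasureTheory Filter Topology

lemma bound_aux {u s c : ℝ} (hu : 0 ≤ u) (hc : 0 < c) (hs : c ≤ s) (k : ℕ) :
    |(-u) ^ k * Real.exp (-s * u)| ≤ (k.factorial : ℝ) / c ^ k := by
  have h1 : |(-u) ^ k * Real.exp (-s * u)| = u ^ k * Real.exp (-s * u) := by
    rw [abs_mul, abs_pow, abs_neg, abs_of_nonneg hu, abs_of_nonneg (Real.exp_pos _).le]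
  rw [h1]
  have h2 : Real.exp (-s * u) ≤ Real.exp (-c * u) := by
    apply Real.exp_le_exp.2; nlinarith
  have h4 := Real.pow_div_factorial_le_exp (x := c * u) (by positivity) k
  have h5 : (0:ℝ) < Real.exp (c * u) := Real.exp_pos _
  have h6 : Real.exp (-c * u) * Real.exp (c * u) = 1 := by
    rw [← Real.exp_add]; norm_num
  have hf : (0:ℝ) < (k.factorial : ℝ) := by positivity
  rw [le_div_iff₀ (by positivity : (0:ℝ) < c ^ k)]
  have h7 : (c * u) ^ k ≤ (k.factorial : ℝ) * Real.exp (c * u) := by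
    rw [div_le_iff₀ hf] at h4; linarith [h4]
  rw [mul_pow] at h7
  calc u ^ k * Real.exp (-s * u) * c ^ k ≤ u ^ k * Real.exp (-c * u) * c ^ k := by
        have := mul_le_mul_of_nonneg_left h2 (pow_nonneg hu k)
        nlinarith [pow_nonneg hc.le k]
    _ = c ^ k * u ^ k * Real.exp (-c * u) := by ring
    _ ≤ (↑k.factorial * Real.exp (c * u)) * Real.exp (-c * u) :=
        mul_le_mul_of_nonneg_right h7 (Real.exp_pos _).le
    _ = ↑k.factorial := by
        rw [mul_assoc]
        nlinarith [h6]

lemma bound_aux2 {u s c : ℝ} (hu : 0 ≤ u) (hc : 0 < c) (hs : 2 * c ≤ s) (k : ℕ) :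
    |(-u) ^ k * Real.exp (-s * u)| ≤ ((k.factorial : ℝ) / c ^ k) * Real.exp (-c * u) := by
  have e1 : Real.exp (-s * u) = Real.exp (-(s - c) * u) * Real.exp (-c * u) := by
    rw [← Real.exp_add]; congr 1; ring
  rw [e1, ← mul_assoc, abs_mul, abs_of_nonneg (Real.exp_pos (-c * u)).le]
  exact mul_le_mul_of_nonneg_right (bound_aux hu hc (by linarith) k) (Real.exp_pos _).le

/-- let `X` be a nonnegative random variable (law `μX`) with finite
mean `μ > 0`, Laplace–Stieltjes transform `ΦX`, and let `L` have the equilibrium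
density `(1 - F_X(u))/μ`, with Laplace–Stieltjes transform `ΦL`.  Then for every
`t > 0` and `k ∈ ℕ`,
`((-t)^k/k!) ΦL^{(k)}(t) = (1/(tμ)) (1 - ∑_{j=0}^k ((-1)^j t^j/j!) ΦX^{(j)}(t))`;
i.e. the weights `P(L^{•t} = k/t)` of the discretization of `L` are given by the
right-hand side. -/
theorem stmt_17 (μX : MeasureTheory.Measure ℝ) [MeasureTheory.IsProbabilityMeasure μX]
    (hsupp : μX (Set.Iio 0) = 0)
    (hint : MeasureTheory.Integrable id μX)
    (μ : ℝ) (hμ : μ = ∫ u, u ∂μX) (hμ_pos : 0 < μ)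
    (F_X : ℝ → ℝ) (hFX : ∀ u : ℝ, F_X u = (μX (Set.Iic u)).toReal)
    (ΦX ΦL : ℝ → ℝ)
    (hΦX : ∀ t : ℝ, 0 < t → ΦX t = ∫ u, Real.exp (-t * u) ∂μX)
    (hΦL : ∀ t : ℝ, 0 < t →
      ΦL t = ∫ u in Set.Ioi (0:ℝ), Real.exp (-t * u) * ((1 - F_X u) / μ)) :
    ∀ t : ℝ, 0 < t → ∀ k : ℕ,
      (-t) ^ k / (k.factorial : ℝ) * iteratedDeriv k ΦL t
        = 1 / (t * μ) *
            (1 - ∑ j ∈ Finset.range (k + 1),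
              ((-1) ^ j * t ^ j / (j.factorial : ℝ)) * iteratedDeriv j ΦX t) := by
  -- basic facts
  have hX0 : ∀ᵐ u ∂μX, 0 ≤ u := by
    rw [ae_iff]
    have hset : {a : ℝ | ¬ 0 ≤ a} = Set.Iio 0 := by ext a; simp
    rw [hset]; exact hsupp
  have hFmono : Monotone F_X := by
    intro a b hab
    rw [hFX a, hFX b]
    exact ENNReal.toReal_mono (measure_ne_top _ _) (measure_mono (Set.Iic_subset_Iic.2 hab))
  have hFmeas : Measurable F_X := hFmono.measurable
  have hF0 : ∀ u, 0 ≤ F_X u := fun u => by rw [hFX u]; exact ENNReal.toReal_nonneg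
  have hF1 : ∀ u, F_X u ≤ 1 := fun u => by
    rw [hFX u]
    simpa using ENNReal.toReal_mono ENNReal.one_ne_top (prob_le_one (μ := μX) (s := Set.Iic u))
  have hwmeas : Measurable (fun u : ℝ => (1 - F_X u) / μ) :=
    (measurable_const.sub hFmeas).div_const μ
  have hcontk : ∀ (k : ℕ) (s : ℝ), Continuous (fun u : ℝ => (-u) ^ k * Real.exp (-s * u)) := by
    intro k s; fun_prop
  have hmeasX : ∀ (k : ℕ) (s : ℝ),
      AEStronglyMeasurable (fun u : ℝ => (-u) ^ k * Real.exp (-s * u)) μX :=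
    fun k s => (hcontk k s).aestronglyMeasurable
  have hmeasL : ∀ (k : ℕ) (s : ℝ),
      AEStronglyMeasurable (fun u : ℝ => (-u) ^ k * Real.exp (-s * u) * ((1 - F_X u) / μ))
        (volume.restrict (Set.Ioi (0:ℝ))) :=
    fun k s => ((hcontk k s).measurable.mul hwmeas).aestronglyMeasurable
  have hintX : ∀ (k : ℕ) (s : ℝ), 0 < s →
      Integrable (fun u : ℝ => (-u) ^ k * Real.exp (-s * u)) μX := by
    intro k s hs
    refine (integrable_const ((k.factorial : ℝ) / s ^ k)).mono' (hmeasX k s) ?_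
    filter_upwards [hX0] with u hu
    exact bound_aux hu hs le_rfl k
  have hwbd : ∀ u : ℝ, |(1 - F_X u) / μ| ≤ 1 / μ := by
    intro u
    rw [abs_div, abs_of_nonneg hμ_pos.le]
    gcongr
    rw [abs_le]
    constructor <;> [linarith [hF1 u]; linarith [hF0 u]]
  have hintL : ∀ (k : ℕ) (s : ℝ), 0 < s →
      Integrable (fun u : ℝ => (-u) ^ k * Real.exp (-s * u) * ((1 - F_X u) / μ))
        (volume.restrict (Set.Ioi (0:ℝ))) := by
    intro k s hs
    have hbint : Integrable
        (fun u : ℝ => ((k.factorial : ℝ) / (s/2) ^ k) * Real.exp (-(s/2) * u) * (1/μ))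
        (volume.restrict (Set.Ioi (0:ℝ))) :=
      ((exp_neg_integrableOn_Ioi 0 (by linarith : (0:ℝ) < s/2)).const_mul _).mul_const _
    refine hbint.mono' (hmeasL k s) ?_
    refine (ae_restrict_iff' measurableSet_Ioi).2 (Filter.Eventually.of_forall fun u hu => ?_)
    rw [Real.norm_eq_abs, abs_mul]
    have h1 := bound_aux2 (u:=u) (s:=s) (c:=s/2) (le_of_lt hu) (by linarith) (by linarith) k
    have h2 := hwbd u
    have := mul_le_mul h1 h2 (abs_nonneg _) (by positivity)
    simpa using this
  -- derivative of the parametric integrals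
  have keyX : ∀ (k : ℕ) (t : ℝ), 0 < t →
      HasDerivAt (fun s => ∫ u, (-u) ^ k * Real.exp (-s * u) ∂μX)
        (∫ u, (-u) ^ (k+1) * Real.exp (-t * u) ∂μX) t := by
    intro k t ht
    have h := hasDerivAt_integral_of_dominated_loc_of_deriv_le (μ := μX)
      (F := fun s (u : ℝ) => (-u) ^ k * Real.exp (-s * u))
      (F' := fun s (u : ℝ) => (-u) ^ (k+1) * Real.exp (-s * u))
      (x₀ := t) (bound := fun _ => ((k+1).factorial : ℝ) / (t/2) ^ (k+1))
      (Metric.ball_mem_nhds t (by linarith : (0:ℝ) < t/2))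
      (Filter.Eventually.of_forall fun s => hmeasX k s) (hintX k t ht) (hmeasX (k+1) t)
      ?_ (integrable_const _) ?_
    · exact h.2
    · filter_upwards [hX0] with u hu
      intro s hs
      rw [Metric.mem_ball, Real.dist_eq] at hs
      obtain ⟨ha, hb⟩ := abs_lt.1 hs
      exact bound_aux hu (by linarith : (0:ℝ) < t/2) (by linarith) (k+1)
    · refine Filter.Eventually.of_forall fun u => ?_
      intro s hs
      have h0 : HasDerivAt (fun s : ℝ => -s * u) (-u) s := by
        simpa using (hasDerivAt_id s).neg.mul_const u
      have h1 := (h0.exp).const_mul ((-u) ^ k)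
      convert h1 using 1
      · rfl
      ring
  have keyL : ∀ (k : ℕ) (t : ℝ), 0 < t →
      HasDerivAt (fun s => ∫ u in Set.Ioi (0:ℝ), (-u) ^ k * Real.exp (-s * u) * ((1 - F_X u) / μ))
        (∫ u in Set.Ioi (0:ℝ), (-u) ^ (k+1) * Real.exp (-t * u) * ((1 - F_X u) / μ)) t := by
    intro k t ht
    have h := hasDerivAt_integral_of_dominated_loc_of_deriv_le
      (μ := volume.restrict (Set.Ioi (0:ℝ)))
      (F := fun s (u : ℝ) => (-u) ^ k * Real.exp (-s * u) * ((1 - F_X u) / μ))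
      (F' := fun s (u : ℝ) => (-u) ^ (k+1) * Real.exp (-s * u) * ((1 - F_X u) / μ))
      (x₀ := t)
      (bound := fun u => (((k+1).factorial : ℝ) / (t/4) ^ (k+1)) * Real.exp (-(t/4) * u) * (1/μ))
      (Metric.ball_mem_nhds t (by linarith : (0:ℝ) < t/4))
      (Filter.Eventually.of_forall fun s => hmeasL k s) (hintL k t ht) (hmeasL (k+1) t)
      ?_
      (((exp_neg_integrableOn_Ioi 0 (by linarith : (0:ℝ) < t/4)).const_mul _).mul_const _)
      ?_
    · exact h.2
    · refine (ae_restrict_iff' measurableSet_Ioi).2 (Filter.Eventually.of_forall fun u hu => ?_)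
      intro s hs
      rw [Metric.mem_ball, Real.dist_eq] at hs
      obtain ⟨ha, hb⟩ := abs_lt.1 hs
      rw [Real.norm_eq_abs, abs_mul]
      have h1 := bound_aux2 (u:=u) (s:=s) (c:=t/4) (le_of_lt hu) (by linarith) (by linarith) (k+1)
      have := mul_le_mul h1 (hwbd u) (abs_nonneg _) (by positivity)
      simpa using this
    · refine Filter.Eventually.of_forall fun u => ?_
      intro s hs
      have h0 : HasDerivAt (fun s : ℝ => -s * u) (-u) s := by
        simpa using (hasDerivAt_id s).neg.mul_const u
      have h1 := ((h0.exp).const_mul ((-u) ^ k)).mul_const ((1 - F_X u) / μ)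
      convert h1 using 1
      · rfl
      ring
  -- closed forms for the iterated derivatives
  have hA : ∀ (k : ℕ) (t : ℝ), 0 < t →
      iteratedDeriv k ΦX t = ∫ u, (-u) ^ k * Real.exp (-t * u) ∂μX := by
    intro k
    induction k with
    | zero =>
      intro t ht
      rw [iteratedDeriv_zero, hΦX t ht]
      simp
    | succ k ih =>
      intro t ht
      rw [iteratedDeriv_succ]
      have hev : iteratedDeriv k ΦX =ᶠ[𝓝 t]
          (fun s => ∫ u, (-u) ^ k * Real.exp (-s * u) ∂μX) :=
        Filter.eventuallyEq_of_mem (Ioi_mem_nhds ht) (fun s hs => ih s hs)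
      rw [hev.deriv_eq]
      exact (keyX k t ht).deriv
  have hB : ∀ (k : ℕ) (t : ℝ), 0 < t →
      iteratedDeriv k ΦL t
        = ∫ u in Set.Ioi (0:ℝ), (-u) ^ k * Real.exp (-t * u) * ((1 - F_X u) / μ) := by
    intro k
    induction k with
    | zero =>
      intro t ht
      rw [iteratedDeriv_zero, hΦL t ht]
      simp
    | succ k ih =>
      intro t ht
      rw [iteratedDeriv_succ]
      have hev : iteratedDeriv k ΦL =ᶠ[𝓝 t]
          (fun s => ∫ u in Set.Ioi (0:ℝ), (-u) ^ k * Real.exp (-s * u) * ((1 - F_X u) / μ)) :=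
        Filter.eventuallyEq_of_mem (Ioi_mem_nhds ht) (fun s hs => ih s hs)
      rw [hev.deriv_eq]
      exact (keyL k t ht).deriv
  -- differentiability of the iterated derivatives
  have hdX : ∀ (k : ℕ) (t : ℝ), 0 < t →
      HasDerivAt (iteratedDeriv k ΦX) (iteratedDeriv (k+1) ΦX t) t := by
    intro k t ht
    have hev : iteratedDeriv k ΦX =ᶠ[𝓝 t]
        (fun s => ∫ u, (-u) ^ k * Real.exp (-s * u) ∂μX) :=
      Filter.eventuallyEq_of_mem (Ioi_mem_nhds ht) (fun s hs => hA k s hs)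
    rw [hA (k+1) t ht]
    exact (keyX k t ht).congr_of_eventuallyEq hev
  have hdL : ∀ (k : ℕ) (t : ℝ), 0 < t →
      HasDerivAt (iteratedDeriv k ΦL) (iteratedDeriv (k+1) ΦL t) t := by
    intro k t ht
    have hev : iteratedDeriv k ΦL =ᶠ[𝓝 t]
        (fun s => ∫ u in Set.Ioi (0:ℝ), (-u) ^ k * Real.exp (-s * u) * ((1 - F_X u) / μ)) :=
      Filter.eventuallyEq_of_mem (Ioi_mem_nhds ht) (fun s hs => hB k s hs)
    rw [hB (k+1) t ht]
    exact (keyL k t ht).congr_of_eventuallyEq hev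
  -- the base identity  t μ ΦL(t) = 1 - ΦX(t)
  have hbase : ∀ t : ℝ, 0 < t → t * μ * ΦL t = 1 - ΦX t := by
    intro t ht
    have htne : t ≠ 0 := ht.ne'
    have hcont : Continuous (fun u : ℝ => Real.exp (-t * u)) := by fun_prop
    have hanti : ∀ x : ℝ, ∫ u in (0:ℝ)..x, Real.exp (-t * u) = (1 - Real.exp (-t * x)) / t := by
      intro x
      have hd : ∀ u : ℝ, HasDerivAt (fun y : ℝ => -(Real.exp (-t * y) / t))
          (Real.exp (-t * u)) u := by
        intro u
        have h0 : HasDerivAt (fun y : ℝ => -t * y) (-t) u := by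
          simpa using (hasDerivAt_id u).const_mul (-t)
        have h1 := (h0.exp.div_const t).neg
        convert h1 using 1
        · rfl
        · rfl
        · rfl
        rw [mul_neg, neg_div, neg_neg, mul_div_assoc, div_self htne, mul_one]
      rw [intervalIntegral.integral_eq_sub_of_hasDerivAt (fun u _ => hd u)
        (hcont.intervalIntegrable 0 x)]
      simp only [mul_zero, Real.exp_zero]
      ring
    have hlc := lintegral_comp_eq_lintegral_meas_lt_mul μX (f := id)
      (g := fun u => Real.exp (-t * u)) hX0 aemeasurable_id
      (fun r _ => hcont.intervalIntegrable 0 r)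
      (Filter.Eventually.of_forall fun u => (Real.exp_pos _).le)
    have e1 : ∫⁻ x, ENNReal.ofReal (∫ u in (0:ℝ)..(id x), Real.exp (-t * u)) ∂μX
        = ∫⁻ x, ENNReal.ofReal ((1 - Real.exp (-t * x)) / t) ∂μX :=
      lintegral_congr fun x => by simp only [id_eq]; rw [hanti x]
    have e2 : ∫⁻ u in Set.Ioi (0:ℝ), μX {a | u < id a} * ENNReal.ofReal (Real.exp (-t * u))
        = ∫⁻ u in Set.Ioi (0:ℝ), ENNReal.ofReal (Real.exp (-t * u) * (1 - F_X u)) := by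
      apply lintegral_congr
      intro u
      have hIic : μX (Set.Iic u) ≠ ⊤ := measure_ne_top _ _
      have hIoi : μX (Set.Ioi u) ≠ ⊤ := measure_ne_top _ _
      have hsum : μX (Set.Iic u) + μX (Set.Ioi u) = 1 := by
        have h := measure_add_measure_compl (μ := μX) (measurableSet_Iic (a := u))
        rwa [Set.compl_Iic, measure_univ] at h
      have h1F : 1 - F_X u = (μX (Set.Ioi u)).toReal := by
        rw [hFX u]
        have h := congrArg ENNReal.toReal hsum
        rw [ENNReal.toReal_add hIic hIoi] at h
        simp only [ENNReal.toReal_one] at h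
        linarith
      have hset : {a : ℝ | u < id a} = Set.Ioi u := rfl
      rw [hset, h1F, ENNReal.ofReal_mul (Real.exp_pos _).le,
        ENNReal.ofReal_toReal hIoi, mul_comm]
    have hintR : IntegrableOn (fun u : ℝ => Real.exp (-t * u) * (1 - F_X u)) (Set.Ioi (0:ℝ)) := by
      refine (exp_neg_integrableOn_Ioi 0 ht).mono'
        ((hcont.measurable.mul (measurable_const.sub hFmeas)).aestronglyMeasurable) ?_
      refine Filter.Eventually.of_forall fun u => ?_
      rw [Real.norm_eq_abs, abs_mul, abs_of_nonneg (Real.exp_pos _).le, abs_of_nonneg (by linarith [hF1 u] : (0:ℝ) ≤ 1 - F_X u)]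
      exact mul_le_of_le_one_right (Real.exp_pos _).le (by linarith [hF0 u])
    have e3 : ∫⁻ u in Set.Ioi (0:ℝ), ENNReal.ofReal (Real.exp (-t * u) * (1 - F_X u))
        = ENNReal.ofReal (∫ u in Set.Ioi (0:ℝ), Real.exp (-t * u) * (1 - F_X u)) :=
      (ofReal_integral_eq_lintegral_ofReal hintR (Filter.Eventually.of_forall fun u =>
        mul_nonneg (Real.exp_pos _).le (by linarith [hF1 u]))).symm
    have hexple : ∀ᵐ x ∂μX, Real.exp (-t * x) ≤ 1 := by
      filter_upwards [hX0] with x hx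
      exact Real.exp_le_one_iff.2 (by nlinarith)
    have hintL2 : Integrable (fun x : ℝ => (1 - Real.exp (-t * x)) / t) μX := by
      refine (integrable_const (1/t)).mono'
        ((continuous_const.sub hcont).div_const t).aestronglyMeasurable ?_
      filter_upwards [hexple] with x hx
      rw [Real.norm_eq_abs, abs_div, abs_of_nonneg ht.le]
      gcongr
      rw [abs_le]
      constructor <;> nlinarith [Real.exp_pos (-t * x)]
    have e4 : ∫⁻ x, ENNReal.ofReal ((1 - Real.exp (-t * x)) / t) ∂μX
        = ENNReal.ofReal (∫ x, (1 - Real.exp (-t * x)) / t ∂μX) :=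
      (ofReal_integral_eq_lintegral_ofReal hintL2 (by
        filter_upwards [hexple] with x hx
        exact div_nonneg (by linarith) ht.le)).symm
    have hcomb : ENNReal.ofReal (∫ x, (1 - Real.exp (-t * x)) / t ∂μX)
        = ENNReal.ofReal (∫ u in Set.Ioi (0:ℝ), Real.exp (-t * u) * (1 - F_X u)) := by
      rw [← e4, ← e3, ← e2, ← e1]
      exact hlc
    have hnn1 : 0 ≤ ∫ x, (1 - Real.exp (-t * x)) / t ∂μX :=
      integral_nonneg_of_ae (by
        filter_upwards [hexple] with x hx
        exact div_nonneg (by linarith) ht.le)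
    have hnn2 : 0 ≤ ∫ u in Set.Ioi (0:ℝ), Real.exp (-t * u) * (1 - F_X u) :=
      integral_nonneg fun u => mul_nonneg (Real.exp_pos _).le (by linarith [hF1 u])
    have hreal : ∫ x, (1 - Real.exp (-t * x)) / t ∂μX
        = ∫ u in Set.Ioi (0:ℝ), Real.exp (-t * u) * (1 - F_X u) := by
      have h := congrArg ENNReal.toReal hcomb
      rwa [ENNReal.toReal_ofReal hnn1, ENNReal.toReal_ofReal hnn2] at h
    have hexp : Integrable (fun u : ℝ => Real.exp (-t * u)) μX := by
      simpa using hintX 0 t ht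
    have h5 : ∫ x, (1 - Real.exp (-t * x)) / t ∂μX = (1 - ΦX t) / t := by
      rw [hΦX t ht, integral_div, integral_sub (integrable_const 1) hexp]
      simp
    have h6 : ΦL t = (∫ u in Set.Ioi (0:ℝ), Real.exp (-t * u) * (1 - F_X u)) / μ := by
      rw [hΦL t ht]
      simp_rw [← mul_div_assoc]
      rw [integral_div]
    rw [h6, ← hreal, h5]
    field_simp
  -- the recursion obtained by differentiating the base identity
  have hrec : ∀ (k : ℕ) (t : ℝ), 0 < t →
      μ * (t * iteratedDeriv (k+1) ΦL t + ((k:ℝ)+1) * iteratedDeriv k ΦL t)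
        = -(iteratedDeriv (k+1) ΦX t) := by
    intro k
    induction k with
    | zero =>
      intro t ht
      have hL : HasDerivAt ΦL (iteratedDeriv 1 ΦL t) t := by
        simpa [iteratedDeriv_zero] using hdL 0 t ht
      have hXd : HasDerivAt ΦX (iteratedDeriv 1 ΦX t) t := by
        simpa [iteratedDeriv_zero] using hdX 0 t ht
      have h1 : HasDerivAt (fun s => s * μ * ΦL s)
          (1 * μ * ΦL t + t * μ * iteratedDeriv 1 ΦL t) t :=
        ((hasDerivAt_id t).mul_const μ).mul hL
      have h2 : HasDerivAt (fun s => 1 - ΦX s) (-(iteratedDeriv 1 ΦX t)) t := by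
        simpa using (hXd.const_sub 1)
      have hev : (fun s => s * μ * ΦL s) =ᶠ[𝓝 t] (fun s => 1 - ΦX s) :=
        Filter.eventuallyEq_of_mem (Ioi_mem_nhds ht) (fun s hs => hbase s hs)
      have huniq := (h1.congr_of_eventuallyEq hev.symm).unique h2
      simp only [iteratedDeriv_zero]
      push_cast
      linarith [huniq]
    | succ k ih =>
      intro t ht
      have h1 : HasDerivAt
          (fun s => μ * (s * iteratedDeriv (k+1) ΦL s + ((k:ℝ)+1) * iteratedDeriv k ΦL s))
          (μ * ((1 * iteratedDeriv (k+1) ΦL t + t * iteratedDeriv (k+2) ΦL t)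
            + ((k:ℝ)+1) * iteratedDeriv (k+1) ΦL t)) t := by
        exact (((hasDerivAt_id t).mul (hdL (k+1) t ht)).add
          ((hdL k t ht).const_mul ((k:ℝ)+1))).const_mul μ
      have h2' : HasDerivAt (fun s => -(iteratedDeriv (k+1) ΦX s))
          (-(iteratedDeriv (k+2) ΦX t)) t := (hdX (k+1) t ht).neg
      have hev : (fun s => μ * (s * iteratedDeriv (k+1) ΦL s + ((k:ℝ)+1) * iteratedDeriv k ΦL s))
          =ᶠ[𝓝 t] (fun s => -(iteratedDeriv (k+1) ΦX s)) :=
        Filter.eventuallyEq_of_mem (Ioi_mem_nhds ht) (fun s hs => ih s hs)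
      have huniq := (h1.congr_of_eventuallyEq hev.symm).unique h2'
      push_cast
      push_cast at huniq
      nlinarith [huniq]
  -- final induction
  intro t ht k
  induction k with
  | zero =>
    simp only [zero_add, pow_zero, Nat.factorial_zero, Nat.cast_one, div_one, one_mul,
      iteratedDeriv_zero, Finset.range_one, Finset.sum_singleton]
    rw [← hbase t ht]
    field_simp
  | succ k ih =>
    rw [Finset.sum_range_succ]
    have hfact : (((k+1).factorial : ℕ) : ℝ) = ((k:ℝ)+1) * (k.factorial : ℝ) := by
      push_cast [Nat.factorial_succ]; ring
    have hf0 : (k.factorial : ℝ) ≠ 0 := Nat.cast_ne_zero.2 k.factorial_ne_zero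
    have hk1 : ((k:ℝ)+1) ≠ 0 := by positivity
    have hr := hrec k t ht
    set A := iteratedDeriv (k+1) ΦL t with hA'
    set B := iteratedDeriv k ΦL t with hB'
    set C := iteratedDeriv (k+1) ΦX t with hC'
    set S := ∑ j ∈ Finset.range (k + 1),
      ((-1) ^ j * t ^ j / (j.factorial : ℝ)) * iteratedDeriv j ΦX t with hS'
    have h1 : 1 - S = t * μ * ((-t) ^ k / (k.factorial : ℝ) * B) := by
      rw [ih]
      field_simp
    have h2 : C = -(μ * (t * A + ((k:ℝ)+1) * B)) := by linarith [hr]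
    have hS2 : S = 1 - t * μ * ((-t) ^ k / (k.factorial : ℝ) * B) := by linarith [h1]
    rw [hfact, hS2, h2]
    have hm1 : ((-1:ℝ)) ^ (k+1) = -((-1:ℝ)) ^ k := by rw [pow_succ]; ring
    have hmt : ((-t)) ^ (k+1) = -t * (-t) ^ k := by rw [pow_succ]; ring
    have hmt2 : ((-t)) ^ k = ((-1:ℝ)) ^ k * t ^ k := by rw [neg_pow]
    rw [hm1, hmt, hmt2]
    have htk : t ^ (k+1) = t * t ^ k := by rw [pow_succ]; ring
    rw [htk]
    field_simp
    ring
end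

section
/- Let X be a Gamma(α, β) random variable with α > 0, β > 0, and let L have the equilibrium density f_L(u) = (1−F_X(u))/μ with μ = α/β. Then for every t > 0 and every natural number k, ((−t)^k/k!) Φ_L^{(k)}(t) = (β/(tα)) ( 1 − Σ_{j=0}^{k} (Γ(α+j)/(Γ(α) j!)) (t/(t+β))^j (β/(t+β))^α ); that is, P(L^{•t} = k/t) = (β/(tα)) (1 − CDF.NB(k; α, β/(t+β))), where CDF.NB(k; α, ρ) = Σ_{j=0}^{k} (Γ(α+j)/(Γ(α) j!)) (1−ρ)^j ρ^α is the cumulative distribution function at k of a negative binomial distribution with α 'successes' and success probability ρ. -/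
open MeasureTheory Filter Topology

/-- The distribution function of a `Gamma(a, b)` random variable
(`a` shape, `b` rate): `∫₀^u b^a y^{a-1} e^{-by} / Γ(a) dy`. -/
noncomputable def gammaCDF (a b : ℝ) (u : ℝ) : ℝ :=
  ∫ y in (0:ℝ)..u, b ^ a * y ^ (a - 1) * Real.exp (-b * y) / Real.Gamma a

open Finset Set


private lemma stmt19_tel (α β : ℝ) (hα : 0 < α) (hβ : 0 < β) (k : ℕ) (t : ℝ) (ht : 0 < t) :
    t * (-∑ j ∈ range (k + 1),
        Real.Gamma (α + j) / (Real.Gamma α * (j.factorial : ℝ)) *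
          ((j : ℝ) * t ^ (j - 1) * (β ^ α * (t + β) ^ (-(α + (j : ℝ)))) +
            t ^ j * (β ^ α * (1 * (-(α + (j : ℝ))) * (t + β) ^ (-(α + (j : ℝ)) - 1)))))
      = (k + 1 : ℝ) * (Real.Gamma (α + (k + 1 : ℕ)) / (Real.Gamma α * ((k + 1).factorial : ℝ)))
          * (t ^ (k + 1) * (β ^ α * (t + β) ^ (-(α + ((k + 1 : ℕ) : ℝ))))) := by
  have htβ : (0:ℝ) < t + β := by linarith
  set a : ℕ → ℝ := fun j =>
    Real.Gamma (α + j) / (Real.Gamma α * (j.factorial : ℝ)) * (j : ℝ) * t ^ j * β ^ α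
      * (t + β) ^ (-(α + (j : ℝ))) with ha
  have key : ∀ j : ℕ,
      t * -(Real.Gamma (α + j) / (Real.Gamma α * (j.factorial : ℝ)) *
          ((j : ℝ) * t ^ (j - 1) * (β ^ α * (t + β) ^ (-(α + (j : ℝ)))) +
            t ^ j * (β ^ α * (1 * (-(α + (j : ℝ))) * (t + β) ^ (-(α + (j : ℝ)) - 1)))))
        = a (j+1) - a j := by
    intro j
    have hgam : Real.Gamma (α + ((j+1 : ℕ) : ℝ)) = (α + j) * Real.Gamma (α + j) := by
      push_cast
      rw [← add_assoc, Real.Gamma_add_one (by positivity)]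
    have hexp : (-(α + (j:ℝ)) - 1) = -(α + ((j+1 : ℕ) : ℝ)) := by push_cast; ring
    have hfac : (((j+1).factorial : ℝ)) = ((j:ℝ)+1) * (j.factorial : ℝ) := by
      rw [Nat.factorial_succ]; push_cast; ring
    have hΓ : Real.Gamma (α + j) ≠ 0 := (Real.Gamma_pos_of_pos (by positivity)).ne'
    have hΓα : Real.Gamma α ≠ 0 := (Real.Gamma_pos_of_pos hα).ne'
    have hfj : (j.factorial : ℝ) ≠ 0 := Nat.cast_ne_zero.mpr j.factorial_ne_zero
    simp only [ha, hexp, hgam, hfac]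
    cases j with
    | zero => push_cast; field_simp; ring
    | succ n =>
      rw [Nat.succ_sub_one]
      push_cast
      field_simp
      ring
  have h1 : t * (-∑ j ∈ range (k + 1),
      Real.Gamma (α + j) / (Real.Gamma α * (j.factorial : ℝ)) *
        ((j : ℝ) * t ^ (j - 1) * (β ^ α * (t + β) ^ (-(α + (j : ℝ)))) +
          t ^ j * (β ^ α * (1 * (-(α + (j : ℝ))) * (t + β) ^ (-(α + (j : ℝ)) - 1)))))
      = ∑ j ∈ range (k + 1), (a (j+1) - a j) := by
    rw [← Finset.sum_neg_distrib, Finset.mul_sum]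
    exact Finset.sum_congr rfl fun j _ => key j
  rw [h1, Finset.sum_range_sub a (k+1)]
  have ha0 : a 0 = 0 := by simp [ha]
  rw [ha0, sub_zero, ha]
  push_cast
  ring

private lemma stmt19_Sderiv (α β : ℝ) (hα : 0 < α) (hβ : 0 < β) (k : ℕ) (t : ℝ) (ht : 0 < t) :
    HasDerivAt (fun s : ℝ => 1 - ∑ j ∈ range (k + 1),
        Real.Gamma (α + j) / (Real.Gamma α * (j.factorial : ℝ)) *
          (s ^ j * (β ^ α * (s + β) ^ (-(α + (j : ℝ))))))
      (-∑ j ∈ range (k + 1),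
        Real.Gamma (α + j) / (Real.Gamma α * (j.factorial : ℝ)) *
          ((j : ℝ) * t ^ (j - 1) * (β ^ α * (t + β) ^ (-(α + (j : ℝ)))) +
            t ^ j * (β ^ α * (1 * (-(α + (j : ℝ))) * (t + β) ^ (-(α + (j : ℝ)) - 1))))) t := by
  have htβ : (0:ℝ) < t + β := by linarith
  refine HasDerivAt.const_sub 1 (HasDerivAt.fun_sum fun j _ => HasDerivAt.const_mul _ ?_)
  have h2 : HasDerivAt (fun s : ℝ => β ^ α * (s + β) ^ (-(α + (j : ℝ))))
      (β ^ α * (1 * (-(α + (j : ℝ))) * (t + β) ^ (-(α + (j : ℝ)) - 1))) t :=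
    HasDerivAt.const_mul _ (((hasDerivAt_id t).add_const β).rpow_const (Or.inl htβ.ne'))
  exact (hasDerivAt_pow j t).mul h2

private lemma stmt19_iter (α β : ℝ) (hα : 0 < α) (hβ : 0 < β) :
    ∀ (k : ℕ) (t : ℝ), 0 < t →
      iteratedDeriv k (fun s => β / (s * α) * (1 - (β / (s + β)) ^ α)) t
        = β / α * k.factorial * (-1) ^ k * (t ^ (k + 1))⁻¹ *
            (1 - ∑ j ∈ range (k + 1),
              Real.Gamma (α + j) / (Real.Gamma α * (j.factorial : ℝ)) *
                (t ^ j * (β ^ α * (t + β) ^ (-(α + (j : ℝ)))))) := by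
  intro k
  induction k with
  | zero =>
    intro t ht
    have htβ : (0:ℝ) < t + β := by linarith
    have hdr : (β / (t + β)) ^ α = β ^ α * (t + β) ^ (-(α + ((0:ℕ) : ℝ))) := by
      rw [Real.div_rpow hβ.le htβ.le]
      push_cast
      rw [add_zero, Real.rpow_neg htβ.le]
      ring
    rw [iteratedDeriv_zero]
    simp only [zero_add, Finset.sum_range_one, Nat.cast_zero, pow_zero, one_mul,
      Nat.factorial_zero, Nat.cast_one, mul_one, pow_one, add_zero] at *
    rw [hdr, div_self (Real.Gamma_pos_of_pos hα).ne', one_mul, mul_comm t α, ← div_div,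
      div_eq_mul_inv (β/α) t]
  | succ k ih =>
    intro t ht
    have htβ : (0:ℝ) < t + β := by linarith
    rw [iteratedDeriv_succ]
    have hev : deriv (iteratedDeriv k fun s => β / (s * α) * (1 - (β / (s + β)) ^ α)) t
        = deriv (fun s : ℝ => β / α * (k.factorial : ℝ) * (-1) ^ k *
            ((s ^ (k + 1))⁻¹ *
            (1 - ∑ j ∈ range (k + 1),
              Real.Gamma (α + j) / (Real.Gamma α * (j.factorial : ℝ)) *
                (s ^ j * (β ^ α * (s + β) ^ (-(α + (j : ℝ)))))))) t := by
      apply Filter.EventuallyEq.deriv_eq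
      filter_upwards [isOpen_Ioi.mem_nhds ht] with s hs
      exact (ih s hs).trans (by ring)
    rw [hev]
    have hpow : (t : ℝ) ^ (k+1) ≠ 0 := pow_ne_zero _ ht.ne'
    have h1 : HasDerivAt (fun s : ℝ => (s ^ (k+1))⁻¹)
        (-((((k+1:ℕ)) : ℝ) * t ^ (k + 1 - 1)) / (t ^ (k+1)) ^ 2) t :=
      (hasDerivAt_pow (k+1) t).inv hpow
    have h2 := stmt19_Sderiv α β hα hβ k t ht
    have hder := (h1.fun_mul h2).const_mul (β / α * (k.factorial : ℝ) * (-1) ^ k)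
    rw [hder.deriv]
    set S' : ℝ := -∑ j ∈ range (k + 1),
        Real.Gamma (α + j) / (Real.Gamma α * (j.factorial : ℝ)) *
          ((j : ℝ) * t ^ (j - 1) * (β ^ α * (t + β) ^ (-(α + (j : ℝ)))) +
            t ^ j * (β ^ α * (1 * (-(α + (j : ℝ))) * (t + β) ^ (-(α + (j : ℝ)) - 1)))) with hS'
    set S : ℝ := 1 - ∑ j ∈ range (k + 1),
        Real.Gamma (α + j) / (Real.Gamma α * (j.factorial : ℝ)) *
          (t ^ j * (β ^ α * (t + β) ^ (-(α + (j : ℝ))))) with hS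
    have htel := stmt19_tel α β hα hβ k t ht
    rw [← hS'] at htel
    have hSsucc : (1 : ℝ) - ∑ j ∈ range (k + 1 + 1),
        Real.Gamma (α + j) / (Real.Gamma α * (j.factorial : ℝ)) *
          (t ^ j * (β ^ α * (t + β) ^ (-(α + (j : ℝ)))))
        = S - Real.Gamma (α + ((k+1 : ℕ) : ℝ)) / (Real.Gamma α * ((k+1).factorial : ℝ)) *
          (t ^ (k+1) * (β ^ α * (t + β) ^ (-(α + ((k+1 : ℕ) : ℝ))))) := by
      rw [Finset.sum_range_succ, hS]
      all_goals (push_cast; ring)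
    rw [hSsucc]
    have hS'val : S' = ((k:ℝ) + 1) * (Real.Gamma (α + ((k+1:ℕ):ℝ)) / (Real.Gamma α * ((k + 1).factorial : ℝ)))
          * (t ^ (k + 1) * (β ^ α * (t + β) ^ (-(α + ((k + 1 : ℕ) : ℝ))))) / t := by
      rw [eq_div_iff ht.ne', mul_comm S' t, htel]
      all_goals (push_cast; ring)
    rw [hS'val]
    simp only [Nat.add_sub_cancel, Nat.factorial_succ]
    push_cast
    field_simp
    ring



section
variable (α β : ℝ)

private lemma stmt19_int_r {α r : ℝ} (hα : 0 < α) (hr : 0 < r) :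
    IntegrableOn (fun y : ℝ => y ^ (α - 1) * Real.exp (-r * y)) (Ioi 0) := by
  have := integrableOn_rpow_mul_exp_neg_mul_rpow (s := α - 1) (p := 1) (by linarith) one_pos hr
  simpa [Real.rpow_one] using this

private lemma stmt19_val_r {α r : ℝ} (hα : 0 < α) (hr : 0 < r) :
    ∫ y in Ioi (0:ℝ), y ^ (α - 1) * Real.exp (-r * y) = (1 / r) ^ α * Real.Gamma α := by
  rw [← Real.integral_rpow_mul_exp_neg_mul_Ioi hα hr]
  refine setIntegral_congr_fun measurableSet_Ioi fun y _ => by rw [neg_mul]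

private lemma stmt19_cont (hα : 0 < α) (hβ : 0 < β) :
    ContinuousOn (fun y : ℝ => β ^ α * y ^ (α - 1) * Real.exp (-β * y) / Real.Gamma α)
      (Ioi 0) := by
  intro y hy
  have h1 : ContinuousAt (fun y : ℝ => y ^ (α - 1)) y :=
    Real.continuousAt_rpow_const y (α - 1) (Or.inl (ne_of_gt hy))
  have h2 : ContinuousAt (fun y : ℝ => Real.exp (-β * y)) y :=
    (Real.continuous_exp.comp (continuous_const.mul continuous_id)).continuousAt
  exact (((continuousAt_const.mul h1).mul h2).div_const _).continuousWithinAt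

private lemma stmt19_int_f (hα : 0 < α) (hβ : 0 < β) :
    IntegrableOn (fun y : ℝ => β ^ α * y ^ (α - 1) * Real.exp (-β * y) / Real.Gamma α)
      (Ioi 0) := by
  have : (fun y : ℝ => β ^ α * y ^ (α - 1) * Real.exp (-β * y) / Real.Gamma α)
      = fun y : ℝ => (β ^ α / Real.Gamma α) * (y ^ (α - 1) * Real.exp (-β * y)) := by
    funext y; ring
  rw [this]
  exact (stmt19_int_r hα hβ).const_mul _

private lemma stmt19_int_ft (hα : 0 < α) (hβ : 0 < β) {t : ℝ} (ht : 0 < t) :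
    IntegrableOn (fun y : ℝ =>
      Real.exp (-t * y) * (β ^ α * y ^ (α - 1) * Real.exp (-β * y) / Real.Gamma α))
      (Ioi 0) := by
  have : (fun y : ℝ =>
      Real.exp (-t * y) * (β ^ α * y ^ (α - 1) * Real.exp (-β * y) / Real.Gamma α))
      = fun y : ℝ => (β ^ α / Real.Gamma α) * (y ^ (α - 1) * Real.exp (-(t + β) * y)) := by
    funext y
    rw [show -(t+β)*y = -t*y + -β*y by ring, Real.exp_add]
    ring
  rw [this]
  exact (stmt19_int_r hα (by linarith)).const_mul _

private lemma stmt19_val_f (hα : 0 < α) (hβ : 0 < β) :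
    ∫ y in Ioi (0:ℝ), β ^ α * y ^ (α - 1) * Real.exp (-β * y) / Real.Gamma α = 1 := by
  have h : (fun y : ℝ => β ^ α * y ^ (α - 1) * Real.exp (-β * y) / Real.Gamma α)
      = fun y : ℝ => (β ^ α / Real.Gamma α) * (y ^ (α - 1) * Real.exp (-β * y)) := by
    funext y; ring
  rw [h, integral_const_mul, stmt19_val_r hα hβ, Real.div_rpow zero_le_one hβ.le, Real.one_rpow]
  have h1 : (0:ℝ) < β ^ α := Real.rpow_pos_of_pos hβ α
  have h2 : (0:ℝ) < Real.Gamma α := Real.Gamma_pos_of_pos hα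
  field_simp

private lemma stmt19_val_ft (hα : 0 < α) (hβ : 0 < β) {t : ℝ} (ht : 0 < t) :
    ∫ y in Ioi (0:ℝ),
      Real.exp (-t * y) * (β ^ α * y ^ (α - 1) * Real.exp (-β * y) / Real.Gamma α)
      = (β / (t + β)) ^ α := by
  have h : (fun y : ℝ =>
      Real.exp (-t * y) * (β ^ α * y ^ (α - 1) * Real.exp (-β * y) / Real.Gamma α))
      = fun y : ℝ => (β ^ α / Real.Gamma α) * (y ^ (α - 1) * Real.exp (-(t + β) * y)) := by
    funext y
    rw [show -(t+β)*y = -t*y + -β*y by ring, Real.exp_add]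
    ring
  have htβ : (0:ℝ) < t + β := by linarith
  rw [h, integral_const_mul, stmt19_val_r hα htβ, Real.div_rpow zero_le_one htβ.le, Real.one_rpow,
    Real.div_rpow hβ.le htβ.le]
  have h2 : (0:ℝ) < Real.Gamma α := Real.Gamma_pos_of_pos hα
  have h3 : (0:ℝ) < (t + β) ^ α := Real.rpow_pos_of_pos htβ α
  field_simp

private lemma stmt19_ii (hα : 0 < α) (hβ : 0 < β) {u : ℝ} (hu : 0 ≤ u) :
    IntervalIntegrable
      (fun y : ℝ => β ^ α * y ^ (α - 1) * Real.exp (-β * y) / Real.Gamma α) volume 0 u := by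
  rw [intervalIntegrable_iff_integrableOn_Ioc_of_le hu]
  exact (stmt19_int_f α β hα hβ).mono_set Ioc_subset_Ioi_self

private lemma stmt19_ii_t (hα : 0 < α) (hβ : 0 < β) {t : ℝ} (ht : 0 < t) {u : ℝ} (hu : 0 ≤ u) :
    IntervalIntegrable
      (fun y : ℝ => Real.exp (-t * y) *
        (β ^ α * y ^ (α - 1) * Real.exp (-β * y) / Real.Gamma α)) volume 0 u := by
  rw [intervalIntegrable_iff_integrableOn_Ioc_of_le hu]
  exact (stmt19_int_ft α β hα hβ ht).mono_set Ioc_subset_Ioi_self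

private lemma stmt19_F_deriv (hα : 0 < α) (hβ : 0 < β) {u : ℝ} (hu : 0 < u) :
    HasDerivAt (gammaCDF α β)
      (β ^ α * u ^ (α - 1) * Real.exp (-β * u) / Real.Gamma α) u := by
  apply intervalIntegral.integral_hasDerivAt_right (stmt19_ii α β hα hβ hu.le)
  · exact ⟨Ioi 0, isOpen_Ioi.mem_nhds hu,
      (stmt19_cont α β hα hβ).aestronglyMeasurable measurableSet_Ioi⟩
  · exact (stmt19_cont α β hα hβ u hu).continuousAt (isOpen_Ioi.mem_nhds hu)

private lemma stmt19_F_lim (hα : 0 < α) (hβ : 0 < β) :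
    Tendsto (gammaCDF α β) atTop (𝓝 1) := by
  have h := intervalIntegral_tendsto_integral_Ioi 0 (stmt19_int_f α β hα hβ) tendsto_id
  rwa [stmt19_val_f α β hα hβ] at h

private lemma stmt19_F_nonneg (hα : 0 < α) (hβ : 0 < β) {u : ℝ} (hu : 0 ≤ u) :
    0 ≤ gammaCDF α β u := by
  apply intervalIntegral.integral_nonneg hu
  intro y hy
  have h1 : 0 ≤ y ^ (α - 1) := Real.rpow_nonneg hy.1 _
  positivity

private lemma stmt19_F_le_one (hα : 0 < α) (hβ : 0 < β) {u : ℝ} (hu : 0 ≤ u) :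
    gammaCDF α β u ≤ 1 := by
  rw [← stmt19_val_f α β hα hβ]
  rw [gammaCDF, intervalIntegral.integral_of_le hu]
  apply setIntegral_mono_set (stmt19_int_f α β hα hβ)
  · filter_upwards [ae_restrict_mem measurableSet_Ioi] with y hy
    have h1 : 0 ≤ y ^ (α - 1) := Real.rpow_nonneg (le_of_lt hy) _
    positivity
  · exact HasSubset.Subset.eventuallyLE Ioc_subset_Ioi_self

private lemma stmt19_H_deriv (hα : 0 < α) (hβ : 0 < β) {t : ℝ} (ht : 0 < t) {u : ℝ} (hu : 0 < u) :
    HasDerivAt (fun v : ℝ => ∫ y in (0:ℝ)..v,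
        Real.exp (-t * y) * (β ^ α * y ^ (α - 1) * Real.exp (-β * y) / Real.Gamma α))
      (Real.exp (-t * u) * (β ^ α * u ^ (α - 1) * Real.exp (-β * u) / Real.Gamma α)) u := by
  have hcont : ContinuousOn (fun y : ℝ => Real.exp (-t * y) *
      (β ^ α * y ^ (α - 1) * Real.exp (-β * y) / Real.Gamma α)) (Ioi 0) :=
    (Real.continuous_exp.comp (continuous_const.mul continuous_id)).continuousOn.mul
      (stmt19_cont α β hα hβ)
  apply intervalIntegral.integral_hasDerivAt_right (stmt19_ii_t α β hα hβ ht hu.le)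
  · exact ⟨Ioi 0, isOpen_Ioi.mem_nhds hu, hcont.aestronglyMeasurable measurableSet_Ioi⟩
  · exact (hcont u hu).continuousAt (isOpen_Ioi.mem_nhds hu)

private lemma stmt19_cwa0 (hα : 0 < α) (hβ : 0 < β)
    (f : ℝ → ℝ) (hf : IntervalIntegrable f volume 0 1) :
    ContinuousWithinAt (fun v : ℝ => ∫ y in (0:ℝ)..v, f y) (Ici 0) 0 := by
  have h := intervalIntegral.continuousWithinAt_primitive (a := 0) (b₁ := 0) (b₂ := 1)
      (b₀ := 0) (μ := volume) (f := f) (measure_singleton 0) (by simpa using hf)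
  apply h.mono_of_mem_nhdsWithin
  rw [← Set.Ici_inter_Iic]
  exact Filter.inter_mem self_mem_nhdsWithin
    (mem_nhdsWithin_of_mem_nhds (Iic_mem_nhds one_pos))

private lemma stmt19_phi (hα : 0 < α) (hβ : 0 < β) {t : ℝ} (ht : 0 < t) :
    ∫ u in Ioi (0:ℝ), Real.exp (-t * u) * (1 - gammaCDF α β u)
      = (1 - (β / (t + β)) ^ α) / t := by
  set f : ℝ → ℝ := fun y => β ^ α * y ^ (α - 1) * Real.exp (-β * y) / Real.Gamma α with hf
  set H : ℝ → ℝ := fun v => ∫ y in (0:ℝ)..v, Real.exp (-t * y) * f y with hH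
  set Φ : ℝ := (β / (t + β)) ^ α with hΦ
  set g : ℝ → ℝ := fun u => -(Real.exp (-t * u) / t) * (1 - gammaCDF α β u) - (1/t) * H u
    with hg
  have hΓ : (0:ℝ) < Real.Gamma α := Real.Gamma_pos_of_pos hα
  have hexpC : Continuous (fun u : ℝ => Real.exp (-t * u)) :=
    Real.continuous_exp.comp (continuous_const.mul continuous_id)
  have hFcontOn : ContinuousOn (gammaCDF α β) (Ioi 0) := fun u hu =>
    ((stmt19_F_deriv α β hα hβ hu).continuousAt).continuousWithinAt
  have hcont : ContinuousWithinAt g (Ici 0) 0 := by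
    have h1 : ContinuousWithinAt (gammaCDF α β) (Ici 0) 0 :=
      stmt19_cwa0 α β hα hβ f (stmt19_ii α β hα hβ zero_le_one)
    have h2 : ContinuousWithinAt H (Ici 0) 0 :=
      stmt19_cwa0 α β hα hβ _ (stmt19_ii_t α β hα hβ ht zero_le_one)
    exact (((hexpC.div_const t).neg.continuousWithinAt).mul
      (continuousWithinAt_const.sub h1)).sub (h2.const_mul (1/t))
  have hderiv : ∀ u ∈ Ioi (0:ℝ),
      HasDerivAt g (Real.exp (-t * u) * (1 - gammaCDF α β u)) u := by
    intro u hu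
    have hA : HasDerivAt (fun u : ℝ => -(Real.exp (-t * u) / t)) (Real.exp (-t * u)) u := by
      have h0 : HasDerivAt (fun u : ℝ => -t * u) (-t) u := by
        simpa using (hasDerivAt_id u).const_mul (-t)
      have h2 := (h0.exp.div_const t).fun_neg
      exact h2.congr_deriv (by field_simp)
    have hB := (stmt19_F_deriv α β hα hβ hu).const_sub 1
    have hHd := (stmt19_H_deriv α β hα hβ ht hu).const_mul (1/t)
    have htot := (hA.fun_mul hB).fun_sub hHd
    exact htot.congr_deriv (by field_simp; ring)
  have g'int : IntegrableOn (fun u => Real.exp (-t * u) * (1 - gammaCDF α β u)) (Ioi 0) := by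
    apply Integrable.mono' (exp_neg_integrableOn_Ioi 0 ht)
    · exact (hexpC.continuousOn.mul
        (continuousOn_const.sub hFcontOn)).aestronglyMeasurable measurableSet_Ioi
    · filter_upwards [ae_restrict_mem measurableSet_Ioi] with u hu
      have h1 := stmt19_F_nonneg α β hα hβ (le_of_lt hu)
      have h2 := stmt19_F_le_one α β hα hβ (le_of_lt hu)
      rw [norm_mul, Real.norm_eq_abs, Real.norm_eq_abs, Real.abs_exp]
      calc Real.exp (-t * u) * |1 - gammaCDF α β u|
          ≤ Real.exp (-t * u) * 1 := by
            apply mul_le_mul_of_nonneg_left _ (Real.exp_nonneg _)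
            rw [abs_le]; constructor <;> linarith
        _ = Real.exp (-t * u) := mul_one _
  have hTg : Tendsto g atTop (𝓝 (-(0 / t) * (1 - 1) - (1/t) * Φ)) := by
    have hexp0 : Tendsto (fun u : ℝ => Real.exp (-t * u)) atTop (𝓝 0) := by
      have h1 : Tendsto (fun u : ℝ => t * u) atTop atTop :=
        Tendsto.const_mul_atTop ht tendsto_id
      have h2 := Real.tendsto_exp_neg_atTop_nhds_zero.comp h1
      simpa [Function.comp_def, neg_mul] using h2
    have hTH : Tendsto H atTop (𝓝 Φ) := by
      have h := intervalIntegral_tendsto_integral_Ioi 0 (stmt19_int_ft α β hα hβ ht) tendsto_id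
      rwa [stmt19_val_ft α β hα hβ ht] at h
    exact (((hexp0.div_const t).neg).mul
      (tendsto_const_nhds.sub (stmt19_F_lim α β hα hβ))).sub (hTH.const_mul (1/t))
  have hmain := integral_Ioi_of_hasDerivAt_of_tendsto hcont hderiv g'int hTg
  rw [hmain, hg]
  have hF0 : gammaCDF α β 0 = 0 := intervalIntegral.integral_same
  have hH0 : H 0 = 0 := intervalIntegral.integral_same
  simp only [hF0, hH0, mul_zero, Real.exp_zero]
  field_simp
  ring

end

/-- let `X` be a `Gamma(α, β)` random variable (`α, β > 0`, mean
`μ = α/β`) and let `L` have the equilibrium density `(1 - F_X(u))/μ`, with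
Laplace–Stieltjes transform `ΦL`.  Then for every `t > 0` and `k ∈ ℕ`,
`((-t)^k/k!) ΦL^{(k)}(t)
  = (β/(tα)) (1 - ∑_{j=0}^k (Γ(α+j)/(Γ(α) j!)) (t/(t+β))^j (β/(t+β))^α)`,
i.e. `P(L^{•t} = k/t) = (β/(tα)) (1 - CDF.NB(k; α, β/(t+β)))`. -/
theorem stmt_19 (α β : ℝ) (hα : 0 < α) (hβ : 0 < β)
    (F_X : ℝ → ℝ) (hFX : ∀ u : ℝ, 0 ≤ u → F_X u = gammaCDF α β u)
    (ΦL : ℝ → ℝ)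
    (hΦL : ∀ t : ℝ, 0 < t →
      ΦL t = ∫ u in Set.Ioi (0:ℝ), Real.exp (-t * u) * ((1 - F_X u) / (α / β))) :
    ∀ t : ℝ, 0 < t → ∀ k : ℕ,
      (-t) ^ k / (k.factorial : ℝ) * iteratedDeriv k ΦL t
        = β / (t * α) *
            (1 - ∑ j ∈ Finset.range (k + 1),
              Real.Gamma (α + j) / (Real.Gamma α * (j.factorial : ℝ))
                * (t / (t + β)) ^ j * (β / (t + β)) ^ α) := by

  intro t ht k
  have htβ : (0:ℝ) < t + β := by linarith
  have hG : ∀ s : ℝ, 0 < s → ΦL s = β / (s * α) * (1 - (β / (s + β)) ^ α) := by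
    intro s hs
    rw [hΦL s hs]
    have hcongr : ∫ u in Ioi (0:ℝ), Real.exp (-s * u) * ((1 - F_X u) / (α / β))
        = (∫ u in Ioi (0:ℝ), Real.exp (-s * u) * (1 - gammaCDF α β u)) * (β / α) := by
      rw [← integral_mul_const]
      apply setIntegral_congr_fun measurableSet_Ioi
      intro u hu
      dsimp only
      rw [hFX u (le_of_lt hu), div_div_eq_mul_div]
      ring
    rw [hcongr, stmt19_phi α β hα hβ hs]
    ring
  have hiter : iteratedDeriv k ΦL t
      = iteratedDeriv k (fun s => β / (s * α) * (1 - (β / (s + β)) ^ α)) t := by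
    apply Filter.EventuallyEq.iteratedDeriv_eq
    filter_upwards [isOpen_Ioi.mem_nhds ht] with s hs
    exact hG s hs
  rw [hiter, stmt19_iter α β hα hβ k t ht]
  have hterm : ∀ j : ℕ,
      Real.Gamma (α + j) / (Real.Gamma α * (j.factorial : ℝ)) * (t / (t + β)) ^ j
          * (β / (t + β)) ^ α
        = Real.Gamma (α + j) / (Real.Gamma α * (j.factorial : ℝ)) *
            (t ^ j * (β ^ α * (t + β) ^ (-(α + (j : ℝ))))) := by
    intro j
    rw [div_pow, Real.div_rpow hβ.le htβ.le, Real.rpow_neg htβ.le, Real.rpow_add htβ,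
      Real.rpow_natCast]
    have h1 : ((t + β) : ℝ) ^ j ≠ 0 := pow_ne_zero _ htβ.ne'
    have h2 : ((t + β) : ℝ) ^ α ≠ 0 := (Real.rpow_pos_of_pos htβ α).ne'
    field_simp
  have hsum : ∑ j ∈ Finset.range (k + 1),
      Real.Gamma (α + j) / (Real.Gamma α * (j.factorial : ℝ)) * (t / (t + β)) ^ j
        * (β / (t + β)) ^ α
      = ∑ j ∈ Finset.range (k + 1),
        Real.Gamma (α + j) / (Real.Gamma α * (j.factorial : ℝ)) *
          (t ^ j * (β ^ α * (t + β) ^ (-(α + (j : ℝ))))) :=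
    Finset.sum_congr rfl fun j _ => hterm j
  rw [hsum]
  have h1 : (-t : ℝ) ^ k = (-1) ^ k * t ^ k := by rw [neg_pow]
  have h2 : ((-1 : ℝ)) ^ k * (-1 : ℝ) ^ k = 1 := by
    rw [← pow_add]
    exact Even.neg_one_pow ⟨k, rfl⟩
  have hk : (k.factorial : ℝ) ≠ 0 := Nat.cast_ne_zero.mpr k.factorial_ne_zero
  have htk : (t : ℝ) ^ k ≠ 0 := pow_ne_zero _ ht.ne'
  have h3 : (t : ℝ) ^ k / (t ^ k * t) = 1 / t := by
    rw [div_mul_eq_div_div, div_self htk]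
  set S : ℝ := 1 - ∑ j ∈ Finset.range (k + 1),
      Real.Gamma (α + j) / (Real.Gamma α * (j.factorial : ℝ)) *
        (t ^ j * (β ^ α * (t + β) ^ (-(α + (j : ℝ)))))
  calc (-t) ^ k / (k.factorial : ℝ) *
        (β / α * (k.factorial : ℝ) * (-1) ^ k * (t ^ (k + 1))⁻¹ * S)
      = ((-1 : ℝ) ^ k * (-1) ^ k) *
          (((k.factorial : ℝ) / (k.factorial : ℝ)) * ((t ^ k / (t ^ k * t)) * (β / α * S))) := by
        rw [h1, pow_succ]
        ring
    _ = β / (t * α) * S := by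
        rw [h2, div_self hk, h3]
        ring
end
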